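/- arXiv:1711.00737 — 11 statements merged into one kernel-verified Lean document; each statement's English description precedes it below -/
import Mathlib

section
/- Suppose r ≤ b_y-norm = (1/c)·∫_c^0 (F(u) − F(c))/(R(u) − 1) du and the case hypothesis (P4) holds. Then the yield curve x ↦ Y(x,r) is strictly increasing on (0,∞) (the yield curve is normal). -/
open Filter Set MeasureTheory

private lemma affine_concaveOn {s : Set ℝ} (hs : Convex ℝ s) (m k : ℝ) :
    ConcaveOn ℝ s (fun u => m * u + k) := by
  refine ⟨hs, fun x _ y _ a b ha hb hab => ?_⟩
  simp only [smul_eq_mul]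
  have h : a * (m * x + k) + b * (m * y + k) = m * (a * x + b * y) + (a + b) * k := by ring
  rw [h, hab, one_mul]

private lemma intervalIntegrable_of_bdd {f : ℝ → ℝ} {a b C : ℝ} (hab : a ≤ b)
    (hcont : ContinuousOn f (Set.Ioc a b)) (hbd : ∀ u ∈ Set.Ioc a b, |f u| ≤ C) :
    IntervalIntegrable f MeasureTheory.volume a b := by
  rw [intervalIntegrable_iff, uIoc_of_le hab]
  refine ⟨hcont.aestronglyMeasurable measurableSet_Ioc, ?_⟩
  apply MeasureTheory.HasFiniteIntegral.restrict_of_bounded (C := C) measure_Ioc_lt_top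
  rw [MeasureTheory.ae_restrict_iff' measurableSet_Ioc]
  exact MeasureTheory.ae_of_all _ fun u hu => by
    simpa [Real.norm_eq_abs] using hbd u hu

set_option maxHeartbeats 1000000 in
/-- If `r ≤ b_y-norm = (1/c)·∫_c^0 (F u − F c)/(R u − 1) du` and the case
hypothesis (P4) holds, then the yield curve `x ↦ Y x r` is strictly increasing on `(0,∞)`
(the yield curve is normal). -/
theorem yield_curve_normal
    (c : ℝ) (hc : c < 0)
    (F R : ℝ → ℝ) (ε : ℝ) (hε : 0 < ε)
    (hFconv : ConvexOn ℝ (Set.Ioo (c - ε) ε) F)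
    (hRconv : ConvexOn ℝ (Set.Ioo (c - ε) ε) R)
    (hFC1 : ContDiffOn ℝ 1 F (Set.Ioo (c - ε) ε))
    (hRC1 : ContDiffOn ℝ 1 R (Set.Ioo (c - ε) ε))
    (hF0 : F 0 = 0) (hR0 : R 0 = 0) (hRc : R c = 1)
    (hRlt1 : ∀ u ∈ Set.Ioc c 0, R u < 1)
    (hR'c : deriv R c < 0)
    (hFne : ∃ u ∈ Set.Icc c 0, F u ≠ 0)
    (hstrict : StrictConvexOn ℝ (Set.Icc c 0) F ∨ StrictConvexOn ℝ (Set.Icc c 0) R)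
    (B : ℝ → ℝ) (hB0 : B 0 = 0)
    (hBode : ∀ x ≥ (0:ℝ), HasDerivAt B (R (B x) - 1) x)
    (hBanti : StrictAntiOn B (Set.Ici 0))
    (hBrange : ∀ x ≥ (0:ℝ), B x ∈ Set.Ioc c 0)
    (hBlim : Tendsto B atTop (nhds c))
    (A : ℝ → ℝ) (hA : ∀ x, A x = ∫ s in (0:ℝ)..x, F (B s))
    (r : ℝ) (Y : ℝ → ℝ → ℝ)
    (hY : ∀ x r', Y x r' = -(A x + r' * B x) / x)
    (hP4 : (0 ≤ r ∧ 0 < deriv F 0) ∨ (∀ u, R u = u / c))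
    (hr : r ≤ (1 / c) * ∫ u in c..(0:ℝ), (F u - F c) / (R u - 1)) :
    StrictMonoOn (fun x => Y x r) (Set.Ioi 0) := by
  have hcne : c ≠ 0 := ne_of_lt hc
  set S : Set ℝ := Set.Ioo (c - ε) ε with hSdef
  have hScc : Set.Icc c 0 ⊆ S := fun u hu => ⟨by rcases hu with ⟨h1, h2⟩; linarith,
    lt_of_le_of_lt hu.2 hε⟩
  have hSopen : IsOpen S := isOpen_Ioo
  have hSconv : Convex ℝ S := convex_Ioo _ _
  have hcS : c ∈ S := hScc ⟨le_rfl, hc.le⟩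
  have h0S : (0:ℝ) ∈ S := hScc ⟨hc.le, le_rfl⟩
  -- derivatives of F and R
  have hFd : ∀ u ∈ S, HasDerivAt F (deriv F u) u := fun u hu =>
    (((hFC1.differentiableOn one_ne_zero) u hu).differentiableAt (hSopen.mem_nhds hu)).hasDerivAt
  have hRd : ∀ u ∈ S, HasDerivAt R (deriv R u) u := fun u hu =>
    (((hRC1.differentiableOn one_ne_zero) u hu).differentiableAt (hSopen.mem_nhds hu)).hasDerivAt
  set g : ℝ → ℝ := fun u => -(F u) - r * (R u - 1) with hgdef
  have hgd : ∀ u ∈ S, HasDerivAt g (-(deriv F u) - r * deriv R u) u := fun u hu => by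
    have h1 := (hFd u hu).neg
    have h2 := ((hRd u hu).sub_const 1).const_mul r
    exact h1.sub h2
  have hgcont : ContinuousOn g S := fun u hu =>
    ((hgd u hu).differentiableAt.continuousAt).continuousWithinAt
  have hFcont : ContinuousOn F S := hFC1.continuousOn
  have hRcont : ContinuousOn R S := hRC1.continuousOn
  -- g is concave on S
  have hgconc : ConcaveOn ℝ S g := by
    rcases hP4 with ⟨hr0, _⟩ | hRlin
    · have h1 : ConcaveOn ℝ S (fun u => -(F u)) := hFconv.neg
      have h2 : ConvexOn ℝ S (fun u => r * R u) := hRconv.smul hr0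
      have h3 : ConcaveOn ℝ S ((fun u => -(r * R u)) + (fun _ => r)) :=
        h2.neg.add (concaveOn_const r hSconv)
      have hge : g = (fun u => -(F u)) + ((fun u => -(r * R u)) + (fun _ => r)) := by
        funext u; simp only [hgdef, Pi.add_apply]; ring
      rw [hge]; exact h1.add h3
    · have h3 : ConcaveOn ℝ S (fun u => (-(r/c)) * u + r) := affine_concaveOn hSconv _ _
      have hge : g = (fun u => -(F u)) + (fun u => (-(r/c)) * u + r) := by
        funext u; simp only [hgdef, Pi.add_apply, hRlin u]; field_simp; ring
      rw [hge]; exact hFconv.neg.add h3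
  have hganti : AntitoneOn (deriv g) S :=
    hgconc.antitoneOn_deriv (fun u hu => (hgd u hu).differentiableAt)
  -- B facts
  have hBcont : ContinuousOn B (Ici 0) := fun x hx => (hBode x hx).continuousAt.continuousWithinAt
  have hBmem : ∀ x ∈ Ici (0:ℝ), B x ∈ Icc c 0 := fun x hx => Ioc_subset_Icc_self (hBrange x hx)
  have hBS : ∀ x ∈ Ici (0:ℝ), B x ∈ S := fun x hx => hScc (hBmem x hx)
  have hhcont : ContinuousOn (fun s => g (B s)) (Ici 0) := hgcont.comp hBcont hBS
  have hFBcont : ContinuousOn (fun s => F (B s)) (Ici 0) := hFcont.comp hBcont hBS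
  have hRBcont : ContinuousOn (fun s => R (B s) - 1) (Ici 0) :=
    (hRcont.comp hBcont hBS).sub continuousOn_const
  have hInt : ∀ f' : ℝ → ℝ, ContinuousOn f' (Ici 0) → ∀ x : ℝ, 0 ≤ x →
      IntervalIntegrable f' volume 0 x := fun f' hf' x hx =>
    (hf'.mono (by rw [uIcc_of_le hx]; exact Icc_subset_Ici_self)).intervalIntegrable
  set I : ℝ → ℝ := fun x => ∫ s in (0:ℝ)..x, g (B s) with hIdef
  have hIeq : ∀ x : ℝ, 0 ≤ x → I x = -(A x + r * B x) := by
    intro x hx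
    have h1 : (∫ s in (0:ℝ)..x, (R (B s) - 1)) = B x - B 0 :=
      intervalIntegral.integral_eq_sub_of_hasDerivAt
        (fun t ht => hBode t (by rw [uIcc_of_le hx] at ht; exact ht.1))
        (hInt _ hRBcont x hx)
    have h2 : I x = (∫ s in (0:ℝ)..x, -(F (B s))) - ∫ s in (0:ℝ)..x, r * (R (B s) - 1) := by
      have h0 : I x = ∫ s in (0:ℝ)..x, (-(F (B s)) - r * (R (B s) - 1)) := rfl
      have hni : IntervalIntegrable (fun s => -(F (B s))) volume 0 x := by
        exact (hInt _ hFBcont x hx).neg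
      have hmi : IntervalIntegrable (fun s => r * (R (B s) - 1)) volume 0 x := by
        simpa using (hInt _ hRBcont x hx).const_mul r
      rw [h0, intervalIntegral.integral_sub hni hmi]
    rw [h2, intervalIntegral.integral_neg, intervalIntegral.integral_const_mul, h1, hB0,
      sub_zero, hA x]
    ring
  -- the key positivity
  have key : ∀ x : ℝ, 0 < x → 0 < x * g (B x) - I x := by
    intro x hx
    have hbIoc : B x ∈ Ioc c 0 := hBrange x hx.le
    have hbc : c < B x := hbIoc.1
    have hb0 : B x < 0 := by
      have h := hBanti (self_mem_Ici) (mem_Ici.2 hx.le) hx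
      rwa [hB0] at h
    have hbS : B x ∈ S := hScc ⟨hbc.le, hbIoc.2⟩
    have hbIcc : Icc (B x) 0 ⊆ Icc c 0 := Icc_subset_Icc hbc.le le_rfl
    have hBab : ∀ s ∈ Icc 0 x, B s ∈ Icc (B x) 0 := by
      intro s hs
      constructor
      · rcases eq_or_lt_of_le hs.2 with h | h
        · rw [h]
        · exact (hBanti (mem_Ici.2 hs.1) (mem_Ici.2 hx.le) h).le
      · rcases eq_or_lt_of_le hs.1 with h | h
        · rw [← h, hB0]
        · have h2 := hBanti self_mem_Ici (mem_Ici.2 hs.1) h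
          rw [hB0] at h2; exact h2.le
    -- the two basic integral identities
    have hψ : x * g (B x) - I x = ∫ s in (0:ℝ)..x, (g (B x) - g (B s)) := by
      rw [intervalIntegral.integral_sub intervalIntegrable_const (hInt _ hhcont x hx.le)]
      have h0 : I x = ∫ s in (0:ℝ)..x, g (B s) := rfl
      rw [intervalIntegral.integral_const, h0]
      simp [smul_eq_mul]
    -- nonconstancy of g on [B x, 0]
    have hnc : ¬ ∀ u ∈ Icc (B x) 0, g u = g (B x) := by
      intro hconst
      have hg0 : g 0 = g (B x) := hconst 0 (right_mem_Icc.2 hb0.le)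
      have hgbr : g (B x) = r := by
        rw [← hg0, hgdef]; simp [hF0, hR0]
      have hFR : ∀ u ∈ Icc (B x) 0, F u = -r * R u := by
        intro u hu
        have h1 : g u = r := (hconst u hu).trans hgbr
        simp only [hgdef] at h1
        linarith [h1]
      have hbm : B x ∈ Icc c 0 := ⟨hbc.le, hb0.le⟩
      have h0m : (0:ℝ) ∈ Icc c 0 := ⟨hc.le, le_rfl⟩
      have hmidmem : (2⁻¹ : ℝ) * B x ∈ Icc (B x) 0 := ⟨by linarith, by linarith⟩
      have hFb : F (B x) = -r * R (B x) := hFR _ (left_mem_Icc.2 hb0.le)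
      have hFh : F (2⁻¹ * B x) = -r * R (2⁻¹ * B x) := hFR _ hmidmem
      have hF00 : F 0 = -r * R 0 := by rw [hF0, hR0]; ring
      rcases hP4 with ⟨hr0, hF'0⟩ | hRlin
      · rcases eq_or_lt_of_le hr0 with hre | hrpos
        · -- r = 0 : F vanishes on [B x, 0], so deriv F 0 = 0
          have hFz : ∀ u ∈ Icc (B x) 0, F u = 0 := fun u hu => by
            rw [hFR u hu, ← hre]; ring
          have h1 : HasDerivWithinAt F (deriv F 0) (Icc (B x) 0) 0 :=
            (hFd 0 h0S).hasDerivWithinAt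
          have h3 : HasDerivWithinAt (fun _ : ℝ => (0:ℝ)) 0 (Icc (B x) 0) 0 :=
            (hasDerivWithinAt_const _ _ _)
          have h2 : HasDerivWithinAt F 0 (Icc (B x) 0) 0 :=
            h3.congr (fun u hu => hFz u hu) (hFz 0 (right_mem_Icc.2 hb0.le))
          have hud : UniqueDiffWithinAt ℝ (Icc (B x) 0) 0 :=
            (uniqueDiffOn_Icc hb0) 0 (right_mem_Icc.2 hb0.le)
          have he : deriv F 0 = 0 := by
            have e1 := h1.derivWithin hud
            have e2 := h2.derivWithin hud
            rw [← e1, e2]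
          rw [he] at hF'0; exact lt_irrefl _ hF'0
        · -- r > 0
          have hRmid : R (2⁻¹ * B x) ≤ (2⁻¹ : ℝ) * R (B x) + (2⁻¹ : ℝ) * R 0 := by
            have h2 := hRconv.2 (hScc hbm) (hScc h0m) (by norm_num : (0:ℝ) ≤ 1/2)
              (by norm_num : (0:ℝ) ≤ 1/2) (by norm_num)
            simpa [smul_eq_mul] using h2
          have hFmid : F (2⁻¹ * B x) ≤ (2⁻¹ : ℝ) * F (B x) + (2⁻¹ : ℝ) * F 0 := by
            have h2 := hFconv.2 (hScc hbm) (hScc h0m) (by norm_num : (0:ℝ) ≤ 1/2)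
              (by norm_num : (0:ℝ) ≤ 1/2) (by norm_num)
            simpa [smul_eq_mul] using h2
          rcases hstrict with hsF | hsR
          · have h1' := hsF.2 hbm h0m hb0.ne (by norm_num : (0:ℝ) < 1/2)
              (by norm_num : (0:ℝ) < 1/2) (by norm_num)
            have h1 : F (2⁻¹ * B x) < 2⁻¹ * F (B x) + 2⁻¹ * F 0 := by
              simpa [smul_eq_mul] using h1'
            rw [hFh, hFb, hF0] at h1
            nlinarith [mul_le_mul_of_nonneg_left hRmid hrpos.le, hR0]
          · have h1' := hsR.2 hbm h0m hb0.ne (by norm_num : (0:ℝ) < 1/2)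
              (by norm_num : (0:ℝ) < 1/2) (by norm_num)
            have h1 : R (2⁻¹ * B x) < 2⁻¹ * R (B x) + 2⁻¹ * R 0 := by
              simpa [smul_eq_mul] using h1'
            rw [hF0] at hFmid
            rw [hFh, hFb] at hFmid
            nlinarith [hR0]
      · -- R linear
        rcases hstrict with hsF | hsR
        · have h1' := hsF.2 hbm h0m hb0.ne (by norm_num : (0:ℝ) < 1/2)
            (by norm_num : (0:ℝ) < 1/2) (by norm_num)
          have h1 : F (2⁻¹ * B x) < 2⁻¹ * F (B x) + 2⁻¹ * F 0 := by
            simpa [smul_eq_mul] using h1'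
          rw [hFh, hFb, hF0, hRlin (2⁻¹ * B x), hRlin (B x)] at h1
          have he : -r * (2⁻¹ * B x / c) = 2⁻¹ * (-r * (B x / c)) + 2⁻¹ * 0 := by ring
          rw [he] at h1
          norm_num at h1
        · have h1' := hsR.2 (⟨le_rfl, hc.le⟩ : c ∈ Icc c 0) h0m hcne
            (by norm_num : (0:ℝ) < 1/2) (by norm_num : (0:ℝ) < 1/2) (by norm_num)
          have h1 : R (2⁻¹ * c) < 2⁻¹ * R c + 2⁻¹ * R 0 := by
            simpa [smul_eq_mul] using h1'
          rw [hRlin (2⁻¹ * c), hRc, hR0] at h1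
          rw [show (2⁻¹ : ℝ) * c / c = 2⁻¹ * (c / c) by ring, div_self hcne] at h1
          norm_num at h1
    by_cases hgb' : deriv g (B x) ≤ 0
    · -- Case I : g ≤ g (B x) on [B x, 0]
      have hub : ∀ u ∈ Icc (B x) 0, g u ≤ g (B x) := by
        intro u hu
        rcases eq_or_lt_of_le hu.1 with h | h
        · rw [← h]
        · have hSu : u ∈ S := hScc (hbIcc hu)
          have hslope : slope g (B x) u ≤ deriv g (B x) :=
            hgconc.slope_le_deriv hbS hSu h (hgd _ hbS).differentiableAt
          rw [slope_def_field] at hslope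
          have h2 : g u - g (B x) ≤ deriv g (B x) * (u - B x) :=
            (div_le_iff₀ (by linarith : (0:ℝ) < u - B x)).mp hslope
          nlinarith [mul_nonpos_of_nonpos_of_nonneg hgb' (by linarith : (0:ℝ) ≤ u - B x)]
      have hρnonneg : ∀ s ∈ Icc 0 x, 0 ≤ g (B x) - g (B s) := fun s hs =>
        sub_nonneg.2 (hub _ (hBab s hs))
      have hex : ∃ u₀ ∈ Ioo (B x) 0, g u₀ < g (B x) := by
        by_contra hno
        push_neg at hno
        apply hnc
        have heq : Set.EqOn g (fun _ => g (B x)) (Ioo (B x) 0) := fun u hu =>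
          le_antisymm (hub u (Ioo_subset_Icc_self hu)) (hno u hu)
        have hg0 : g 0 = g (B x) := by
          have hne : (nhdsWithin (0:ℝ) (Ioo (B x) 0)).NeBot := by
            apply mem_closure_iff_nhdsWithin_neBot.mp
            rw [closure_Ioo hb0.ne]
            exact right_mem_Icc.2 hb0.le
          have hat : ContinuousAt g 0 := hgcont.continuousAt (hSopen.mem_nhds h0S)
          have h1 : Tendsto g (nhdsWithin (0:ℝ) (Ioo (B x) 0)) (nhds (g 0)) :=
            hat.continuousWithinAt
          have h2 : Tendsto g (nhdsWithin (0:ℝ) (Ioo (B x) 0)) (nhds (g (B x))) := by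
            have hcongr : g =ᶠ[nhdsWithin (0:ℝ) (Ioo (B x) 0)] (fun _ => g (B x)) := by
              filter_upwards [self_mem_nhdsWithin] with u hu
              exact heq hu
            exact (tendsto_congr' hcongr).mpr tendsto_const_nhds
          exact tendsto_nhds_unique h1 h2
        intro u hu
        rcases eq_or_lt_of_le hu.2 with h0' | h0'
        · rw [h0']; exact hg0
        · rcases eq_or_lt_of_le hu.1 with hb' | hb'
          · rw [← hb']
          · exact heq ⟨hb', h0'⟩
      obtain ⟨u₀, hu₀, hglt⟩ := hex
      have hIVT : Ioo (B x) (B 0) ⊆ B '' Ioo 0 x :=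
        intermediate_value_Ioo' hx.le (hBcont.mono (by
          intro y hy
          exact hy.1))
      have hu₀' : u₀ ∈ Ioo (B x) (B 0) := by rw [hB0]; exact hu₀
      obtain ⟨s₀, hs₀, hBs₀⟩ := hIVT hu₀'
      have hρpos : 0 < g (B x) - g (B s₀) := by rw [hBs₀]; linarith
      have hρcont : ContinuousOn (fun s => g (B x) - g (B s)) (Ici 0) :=
        continuousOn_const.sub hhcont
      have hρAt : ContinuousAt (fun s => g (B x) - g (B s)) s₀ :=
        hρcont.continuousAt (Ici_mem_nhds hs₀.1)
      have hev : ∀ᶠ y in nhds s₀, (g (B x) - g (B y)) ∈ Ioi 0 :=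
        hρAt.eventually (isOpen_Ioi.eventually_mem hρpos)
      obtain ⟨δ, hδpos, hδ⟩ := Metric.eventually_nhds_iff.mp hev
      have hint : ∀ a' b' : ℝ, 0 ≤ a' → 0 ≤ b' →
          IntervalIntegrable (fun s => g (B x) - g (B s)) volume a' b' := by
        intro a' b' ha' hb'
        apply ContinuousOn.intervalIntegrable
        exact hρcont.mono (fun y hy => le_trans (le_min ha' hb') hy.1)
      set s₁ := max (s₀ - δ/2) (s₀/2) with hs₁def
      set s₂ := min (s₀ + δ/2) ((s₀ + x)/2) with hs₂def
      have h0s₁ : 0 < s₁ := lt_max_of_lt_right (by linarith [hs₀.1])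
      have hs₁s₀ : s₁ < s₀ := max_lt (by linarith) (by linarith [hs₀.1])
      have hs₀s₂ : s₀ < s₂ := lt_min (by linarith) (by linarith [hs₀.2])
      have hs₂x : s₂ < x := lt_of_le_of_lt (min_le_right _ _) (by linarith [hs₀.2])
      have hmid : ∀ y ∈ Ioo s₁ s₂, 0 < g (B x) - g (B y) := by
        intro y hy
        apply hδ
        rw [Real.dist_eq, abs_lt]
        constructor
        · have h1 := hy.1
          have h2 := le_max_left (s₀ - δ/2) (s₀/2)
          simp only [hs₁def] at h1
          linarith
        · have h1 := hy.2
          have h2 := min_le_left (s₀ + δ/2) ((s₀ + x)/2)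
          simp only [hs₂def] at h1
          linarith
      rw [hψ]
      rw [← intervalIntegral.integral_add_adjacent_intervals (hint 0 s₁ le_rfl h0s₁.le)
        (hint s₁ x h0s₁.le hx.le)]
      rw [← intervalIntegral.integral_add_adjacent_intervals (hint s₁ s₂ h0s₁.le (by linarith))
        (hint s₂ x (by linarith) hx.le)]
      have p1 : 0 ≤ ∫ s in (0:ℝ)..s₁, (g (B x) - g (B s)) :=
        intervalIntegral.integral_nonneg h0s₁.le
          (fun u hu => hρnonneg u ⟨hu.1, by linarith [hu.2, hs₀.2]⟩)
      have p3 : 0 ≤ ∫ s in s₂..x, (g (B x) - g (B s)) :=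
        intervalIntegral.integral_nonneg hs₂x.le
          (fun u hu => hρnonneg u ⟨by linarith [hu.1], hu.2⟩)
      have p2 : 0 < ∫ s in s₁..s₂, (g (B x) - g (B s)) :=
        intervalIntegral.intervalIntegral_pos_of_pos_on
          (hint s₁ s₂ h0s₁.le (by linarith)) hmid (by linarith)
      linarith
    · -- Case II
      push_neg at hgb'
      have hmono : StrictMonoOn g (Icc c (B x)) := by
        apply strictMonoOn_of_deriv_pos (convex_Icc c (B x))
        · exact hgcont.mono ((Icc_subset_Icc le_rfl hbIoc.2).trans hScc)
        · intro u hu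
          rw [interior_Icc] at hu
          have huS : u ∈ S := hScc ⟨hu.1.le, le_trans hu.2.le hbIoc.2⟩
          have h := hganti huS hbS hu.2.le
          linarith
      have hgcb : g c < g (B x) :=
        hmono (left_mem_Icc.2 hbc.le) (right_mem_Icc.2 hbc.le) hbc
      have hden : ∀ u ∈ Ioc c 0, 0 < 1 - R u := fun u hu => by linarith [hRlt1 u hu]
      have hdenb : ∀ u ∈ Icc (B x) 0, 0 < 1 - R u := fun u hu =>
        hden u ⟨lt_of_lt_of_le hbc hu.1, hu.2⟩
      have hRub : ∀ u ∈ Icc c 0, R u ≤ u / c := by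
        intro u hu
        have ht0 : 0 ≤ u / c := div_nonneg_of_nonpos hu.2 hc.le
        have ht1 : u / c ≤ 1 := by
          rw [div_le_iff_of_neg hc]
          linarith [hu.1]
        have h2 := hRconv.2 hcS h0S ht0 (by linarith : (0:ℝ) ≤ 1 - u / c) (by ring)
        simp only [smul_eq_mul, mul_zero, add_zero, hRc, hR0, mul_one] at h2
        rwa [div_mul_cancel₀ u hcne] at h2
      have hdenlb : ∀ u ∈ Icc c 0, (u - c) / (-c) ≤ 1 - R u := by
        intro u hu
        have h1 := hRub u hu
        have he : (u - c) / (-c) = 1 - u / c := by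
          rw [div_neg, ← neg_div, neg_sub, sub_div, div_self hcne]
        rw [he]
        linarith
      have hgsb : ∀ u ∈ Ioc c 0, |g u - g c| ≤ max |deriv g c| |deriv g 0| * (u - c) := by
        intro u hu
        have hcu : c < u := hu.1
        have huS : u ∈ S := hScc ⟨hcu.le, hu.2⟩
        have hpos : (0:ℝ) < u - c := by linarith
        have h1 : slope g c u ≤ deriv g c :=
          hgconc.slope_le_deriv hcS huS hcu (hgd c hcS).differentiableAt
        have h2 : deriv g u ≤ slope g c u :=
          hgconc.deriv_le_slope hcS huS hcu (hgd u huS).differentiableAt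
        have h3 : deriv g 0 ≤ deriv g u := hganti huS h0S hu.2
        rw [slope_def_field] at h1 h2
        have h1' : g u - g c ≤ deriv g c * (u - c) := (div_le_iff₀ hpos).mp h1
        have h2' : deriv g u * (u - c) ≤ g u - g c := (le_div_iff₀ hpos).mp h2
        rw [abs_le]
        constructor
        · have hm : -(max |deriv g c| |deriv g 0|) ≤ deriv g u :=
            le_trans (neg_le_neg (le_max_right _ _)) (le_trans (neg_abs_le _) h3)
          linarith [mul_le_mul_of_nonneg_right hm hpos.le]
        · have hm : deriv g c ≤ max |deriv g c| |deriv g 0| :=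
            le_trans (le_abs_self _) (le_max_left _ _)
          linarith [mul_le_mul_of_nonneg_right hm hpos.le]
      have hFmonoD : MonotoneOn (deriv F) S :=
        hFconv.monotoneOn_deriv (fun u hu => (hFd u hu).differentiableAt)
      have hFsb : ∀ u ∈ Ioc c 0, |F u - F c| ≤ max |deriv F c| |deriv F 0| * (u - c) := by
        intro u hu
        have hcu : c < u := hu.1
        have huS : u ∈ S := hScc ⟨hcu.le, hu.2⟩
        have hpos : (0:ℝ) < u - c := by linarith
        have h1 : deriv F c ≤ slope F c u :=
          hFconv.deriv_le_slope hcS huS hcu (hFd c hcS).differentiableAt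
        have h2 : slope F c u ≤ deriv F u :=
          hFconv.slope_le_deriv hcS huS hcu (hFd u huS).differentiableAt
        have h3 : deriv F u ≤ deriv F 0 := hFmonoD huS h0S hu.2
        rw [slope_def_field] at h1 h2
        have h1' : deriv F c * (u - c) ≤ F u - F c := (le_div_iff₀ hpos).mp h1
        have h2' : F u - F c ≤ deriv F u * (u - c) := (div_le_iff₀ hpos).mp h2
        rw [abs_le]
        constructor
        · have hm : -(max |deriv F c| |deriv F 0|) ≤ deriv F c :=
            le_trans (neg_le_neg (le_max_left _ _)) (neg_abs_le _)
          linarith [mul_le_mul_of_nonneg_right hm hpos.le]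
        · have hm : deriv F u ≤ max |deriv F c| |deriv F 0| :=
            le_trans h3 (le_trans (le_abs_self _) (le_max_right _ _))
          linarith [mul_le_mul_of_nonneg_right hm hpos.le]
      have hq1bd : ∀ u ∈ Ioc c 0,
          |(g u - g c) / (1 - R u)| ≤ max |deriv g c| |deriv g 0| * (-c) := by
        intro u hu
        have hd1 : 0 < 1 - R u := hden u hu
        have hd2 : (u - c) / (-c) ≤ 1 - R u := hdenlb u (Ioc_subset_Icc_self hu)
        have hn := hgsb u hu
        have hpos : (0:ℝ) < u - c := by linarith [hu.1]
        have hd3 : 0 < (u - c) / (-c) := div_pos hpos (by linarith)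
        rw [abs_div, abs_of_pos hd1]
        calc |g u - g c| / (1 - R u)
            ≤ (max |deriv g c| |deriv g 0| * (u - c)) / ((u - c) / (-c)) :=
              div_le_div₀ (by positivity) hn hd3 hd2
          _ = max |deriv g c| |deriv g 0| * (-c) := by
              rw [div_div_eq_mul_div, show max |deriv g c| |deriv g 0| * (u - c) * (-c) =
                max |deriv g c| |deriv g 0| * (-c) * (u - c) from by ring]
              exact mul_div_cancel_right₀ _ hpos.ne'
      have hpbd : ∀ u ∈ Ioc c 0,
          |(F u - F c) / (R u - 1)| ≤ max |deriv F c| |deriv F 0| * (-c) := by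
        intro u hu
        have hd1 : 0 < 1 - R u := hden u hu
        have hd2 : (u - c) / (-c) ≤ 1 - R u := hdenlb u (Ioc_subset_Icc_self hu)
        have hn := hFsb u hu
        have hpos : (0:ℝ) < u - c := by linarith [hu.1]
        have hd3 : 0 < (u - c) / (-c) := div_pos hpos (by linarith)
        rw [abs_div, abs_of_neg (by linarith : R u - 1 < 0), neg_sub]
        calc |F u - F c| / (1 - R u)
            ≤ (max |deriv F c| |deriv F 0| * (u - c)) / ((u - c) / (-c)) :=
              div_le_div₀ (by positivity) hn hd3 hd2
          _ = max |deriv F c| |deriv F 0| * (-c) := by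
              rw [div_div_eq_mul_div, show max |deriv F c| |deriv F 0| * (u - c) * (-c) =
                max |deriv F c| |deriv F 0| * (-c) * (u - c) from by ring]
              exact mul_div_cancel_right₀ _ hpos.ne'
      have hIoc_sub : Ioc c 0 ⊆ S := fun u hu => hScc (Ioc_subset_Icc_self hu)
      have hq1cont : ContinuousOn (fun u => (g u - g c) / (1 - R u)) (Ioc c 0) :=
        ((hgcont.mono hIoc_sub).sub continuousOn_const).div
          (continuousOn_const.sub (hRcont.mono hIoc_sub)) (fun u hu => (hden u hu).ne')
      have hpcont : ContinuousOn (fun u => (F u - F c) / (R u - 1)) (Ioc c 0) :=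
        ((hFcont.mono hIoc_sub).sub continuousOn_const).div
          ((hRcont.mono hIoc_sub).sub continuousOn_const)
          (fun u hu => sub_ne_zero_of_ne (ne_of_lt (hRlt1 u hu)))
      have hq1int_c0 : IntervalIntegrable (fun u => (g u - g c) / (1 - R u)) volume c 0 :=
        intervalIntegrable_of_bdd hc.le hq1cont hq1bd
      have hq1int_cb : IntervalIntegrable (fun u => (g u - g c) / (1 - R u)) volume c (B x) :=
        intervalIntegrable_of_bdd hbc.le (hq1cont.mono (Ioc_subset_Ioc le_rfl hb0.le))
          (fun u hu => hq1bd u (Ioc_subset_Ioc le_rfl hb0.le hu))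
      have hpint : IntervalIntegrable (fun u => (F u - F c) / (R u - 1)) volume c 0 :=
        intervalIntegrable_of_bdd hc.le hpcont hpbd
      have hIccb_sub : Icc (B x) 0 ⊆ S := hbIcc.trans hScc
      have hq1cont_b0 : ContinuousOn (fun u => (g u - g c) / (1 - R u)) (Icc (B x) 0) :=
        ((hgcont.mono hIccb_sub).sub continuousOn_const).div
          (continuousOn_const.sub (hRcont.mono hIccb_sub)) (fun u hu => (hdenb u hu).ne')
      have hq1int_b0 : IntervalIntegrable (fun u => (g u - g c) / (1 - R u)) volume (B x) 0 := by
        apply ContinuousOn.intervalIntegrable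
        rw [uIcc_of_le hb0.le]
        exact hq1cont_b0
      have hDcont : ContinuousOn (fun u => 1 / (1 - R u)) (Icc (B x) 0) :=
        continuousOn_const.div (continuousOn_const.sub (hRcont.mono hIccb_sub))
          (fun u hu => (hdenb u hu).ne')
      have hqtcont : ContinuousOn (fun u => (g u - g (B x)) / (1 - R u)) (Icc (B x) 0) :=
        ((hgcont.mono hIccb_sub).sub continuousOn_const).div
          (continuousOn_const.sub (hRcont.mono hIccb_sub)) (fun u hu => (hdenb u hu).ne')
      have hDint : IntervalIntegrable (fun u => 1 / (1 - R u)) volume (B x) 0 := by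
        apply ContinuousOn.intervalIntegrable
        rw [uIcc_of_le hb0.le]
        exact hDcont
      have hqtint : IntervalIntegrable (fun u => (g u - g (B x)) / (1 - R u)) volume (B x) 0 := by
        apply ContinuousOn.intervalIntegrable
        rw [uIcc_of_le hb0.le]
        exact hqtcont
      have hae : ∀ᵐ u ∂(volume : MeasureTheory.Measure ℝ), u ∈ Set.uIoc c (0:ℝ) →
          (g u - g c) / (1 - R u) = (F u - F c) / (R u - 1) + r := by
        apply MeasureTheory.ae_of_all
        intro u hu
        rw [uIoc_of_le hc.le] at hu
        have h1 : (1 - R u) ≠ 0 := (hden u hu).ne'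
        have h2 : R u - 1 ≠ 0 := sub_ne_zero_of_ne (ne_of_lt (hRlt1 u hu))
        simp only [hgdef, hRc]
        field_simp
        ring
      have hKval : (∫ u in c..(0:ℝ), (g u - g c) / (1 - R u)) =
          (∫ u in c..(0:ℝ), (F u - F c) / (R u - 1)) + (0 - c) * r := by
        rw [intervalIntegral.integral_congr_ae hae,
          intervalIntegral.integral_add hpint intervalIntegrable_const,
          intervalIntegral.integral_const]
        simp [smul_eq_mul]
      have hKle : (∫ u in c..(0:ℝ), (g u - g c) / (1 - R u)) ≤ 0 := by
        have h1 : c * (1 / c * ∫ u in c..(0:ℝ), (F u - F c) / (R u - 1)) =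
            ∫ u in c..(0:ℝ), (F u - F c) / (R u - 1) := by
          field_simp
        have h2 := mul_le_mul_of_nonpos_left hr hc.le
        rw [h1] at h2
        linarith [hKval]
      have hKcb : 0 ≤ ∫ u in c..(B x), (g u - g c) / (1 - R u) := by
        apply intervalIntegral.integral_nonneg hbc.le
        intro u hu
        rcases eq_or_lt_of_le hu.1 with h | h
        · rw [← h]
          simp
        · have hu0 : u ∈ Ioc c 0 := ⟨h, le_trans hu.2 hbIoc.2⟩
          have hgu : g c < g u := hmono (left_mem_Icc.2 hbc.le) ⟨hu.1, hu.2⟩ h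
          exact div_nonneg (by linarith) (hden u hu0).le
      have hKsplit : (∫ u in c..(0:ℝ), (g u - g c) / (1 - R u)) =
          (∫ u in c..(B x), (g u - g c) / (1 - R u)) +
            ∫ u in (B x)..(0:ℝ), (g u - g c) / (1 - R u) :=
        (intervalIntegral.integral_add_adjacent_intervals hq1int_cb hq1int_b0).symm
      have hsplit2 : (∫ u in (B x)..(0:ℝ), (g u - g c) / (1 - R u)) =
          (∫ u in (B x)..(0:ℝ), (g u - g (B x)) / (1 - R u)) +
            (g (B x) - g c) * ∫ u in (B x)..(0:ℝ), 1 / (1 - R u) := by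
        rw [← intervalIntegral.integral_const_mul,
          ← intervalIntegral.integral_add hqtint (hDint.const_mul _)]
        apply intervalIntegral.integral_congr
        intro u hu
        rw [uIcc_of_le hb0.le] at hu
        have h1 : (1 - R u) ≠ 0 := (hdenb u hu).ne'
        field_simp
        ring
      have himg : B '' (uIcc 0 x) ⊆ Icc (B x) 0 := by
        rw [uIcc_of_le hx.le]
        rintro _ ⟨s, hs, rfl⟩
        exact hBab s hs
      have hsubst := intervalIntegral.integral_comp_smul_deriv' (f := B)
        (f' := fun s => R (B s) - 1) (g := fun u => -((g u - g (B x)) / (1 - R u)))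
        (fun s hs => hBode s (by rw [uIcc_of_le hx.le] at hs; exact hs.1))
        (hRBcont.mono (by rw [uIcc_of_le hx.le]; exact Icc_subset_Ici_self))
        ((hqtcont.neg).mono himg)
      simp only [Function.comp] at hsubst
      have hEq1 : (∫ s in (0:ℝ)..x, (g (B s) - g (B x))) =
          ∫ s in (0:ℝ)..x, (R (B s) - 1) • (-((g (B s) - g (B x)) / (1 - R (B s)))) := by
        apply intervalIntegral.integral_congr
        intro s hs
        rw [uIcc_of_le hx.le] at hs
        have h1 : (1 - R (B s)) ≠ 0 := (hden _ (hBrange s hs.1)).ne'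
        simp only [smul_eq_mul]
        field_simp
        ring
      have hsymm : (∫ u in (B x)..(0:ℝ), (g u - g (B x)) / (1 - R u)) =
          -∫ u in (0:ℝ)..(B x), (g u - g (B x)) / (1 - R u) :=
        intervalIntegral.integral_symm _ _
      have hsub : (∫ s in (0:ℝ)..x, (g (B s) - g (B x))) =
          ∫ u in (B x)..(0:ℝ), (g u - g (B x)) / (1 - R u) := by
        rw [hEq1, hsubst, hB0, intervalIntegral.integral_neg, hsymm]
      have hψ2 : I x - x * g (B x) = ∫ u in (B x)..(0:ℝ), (g u - g (B x)) / (1 - R u) := by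
        rw [← hsub]
        have h0 : I x = ∫ s in (0:ℝ)..x, g (B s) := rfl
        rw [intervalIntegral.integral_sub (hInt _ hhcont x hx.le) intervalIntegrable_const,
          intervalIntegral.integral_const, h0]
        simp [smul_eq_mul]
      have hD : 0 < ∫ u in (B x)..(0:ℝ), 1 / (1 - R u) := by
        apply intervalIntegral.intervalIntegral_pos_of_pos_on hDint _ hb0
        intro u hu
        have h1 := hdenb u (Ioo_subset_Icc_self hu)
        positivity
      have hprod : 0 < (g (B x) - g c) * ∫ u in (B x)..(0:ℝ), 1 / (1 - R u) :=
        mul_pos (by linarith) hD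
      have h8 : (∫ u in (B x)..(0:ℝ), (g u - g (B x)) / (1 - R u)) +
          (g (B x) - g c) * (∫ u in (B x)..(0:ℝ), 1 / (1 - R u)) ≤ 0 := by
        linarith [hKsplit, hsplit2, hKcb, hKle]
      have h9 : I x - x * g (B x) < 0 := by
        rw [hψ2]
        linarith [h8, hprod]
      linarith [h9]
  -- derivative of the average
  have hGd : ∀ x ∈ Ioi (0:ℝ), HasDerivAt (fun y => I y / y)
      ((g (B x) * x - I x * 1) / x ^ 2) x := by
    intro x hx
    have hxpos : (0:ℝ) < x := hx
    have hId : HasDerivAt I (g (B x)) x :=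
      intervalIntegral.integral_hasDerivAt_right (hInt _ hhcont x hxpos.le)
        (ContinuousOn.stronglyMeasurableAtFilter isOpen_Ioi
          (hhcont.mono Ioi_subset_Ici_self) x hx)
        (hhcont.continuousAt (Ici_mem_nhds hxpos))
    exact hId.div (hasDerivAt_id x) hxpos.ne'
  have hmonoG : StrictMonoOn (fun y => I y / y) (Ioi (0:ℝ)) := by
    apply strictMonoOn_of_deriv_pos (convex_Ioi 0)
    · intro y hy
      exact ((hGd y hy).continuousAt).continuousWithinAt
    · intro y hy
      rw [interior_Ioi] at hy
      rw [(hGd y hy).deriv]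
      have hypos : (0:ℝ) < y := hy
      have hk := key y hypos
      have hnum : 0 < g (B y) * y - I y * 1 := by nlinarith [hk]
      exact div_pos hnum (by positivity)
  intro a ha b hb hab
  have hYa : Y a r = I a / a := by
    rw [hY a r, ← hIeq a (le_of_lt ha)]
  have hYb : Y b r = I b / b := by
    rw [hY b r, ← hIeq b (le_of_lt hb)]
  show Y a r < Y b r
  rw [hYa, hYb]
  exact hmonoG ha hb hab
end

section
/- Suppose r > b_y-norm = (1/c)·∫_c^0 (F(u) − F(c))/(R(u) − 1) du, suppose that R'(0) < 0 implies r < −F'(0)/R'(0), and suppose the case hypothesis (P4) holds. Then the yield curve x ↦ Y(x,r) is humped: there exists a unique x* ∈ (0,∞) such that Y(·,r) is strictly increasing on (0,x*] and strictly decreasing on [x*,∞); in particular Y(·,r) has exactly one local maximum and no local minimum on (0,∞). -/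
open Filter Set

/-- A function continuous on `Ici a` with zero derivative on `Ioi a` is constant. -/
lemma constOn_Ici {f : ℝ → ℝ} {a : ℝ} (hcont : ContinuousOn f (Ici a))
    (hder : ∀ x ∈ Ioi a, HasDerivAt f 0 x) : ∀ x ∈ Ici a, f x = f a := by
  have hd : DifferentiableOn ℝ f (interior (Ici a)) := by
    rw [interior_Ici]
    exact fun x hx => ((hder x hx).differentiableAt).differentiableWithinAt
  have h0 : ∀ x ∈ interior (Ici a), deriv f x = 0 := by
    rw [interior_Ici]; exact fun x hx => (hder x hx).deriv
  have hm := monotoneOn_of_deriv_nonneg (convex_Ici a) hcont hd (fun x hx => (h0 x hx).ge)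
  have ha := antitoneOn_of_deriv_nonpos (convex_Ici a) hcont hd (fun x hx => (h0 x hx).le)
  exact fun x hx => le_antisymm (ha self_mem_Ici hx hx) (hm self_mem_Ici hx hx)

/-- If `b_y-norm < r`, and `R'(0) < 0` implies `r < −F'(0)/R'(0)`, and (P4)
holds, then the yield curve is humped: there is a unique `x⋆ ∈ (0,∞)` such that `Y (·, r)`
is strictly increasing on `(0, x⋆]` and strictly decreasing on `[x⋆, ∞)`. -/
theorem yield_curve_humped
(c : ℝ) (hc : c < 0)
    (F R : ℝ → ℝ) (ε : ℝ) (hε : 0 < ε)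
    (hFconv : ConvexOn ℝ (Set.Ioo (c - ε) ε) F)
    (hRconv : ConvexOn ℝ (Set.Ioo (c - ε) ε) R)
    (hFC1 : ContDiffOn ℝ 1 F (Set.Ioo (c - ε) ε))
    (hRC1 : ContDiffOn ℝ 1 R (Set.Ioo (c - ε) ε))
    (hF0 : F 0 = 0) (hR0 : R 0 = 0) (hRc : R c = 1)
    (hRlt1 : ∀ u ∈ Set.Ioc c 0, R u < 1)
    (hR'c : deriv R c < 0)
    (hFne : ∃ u ∈ Set.Icc c 0, F u ≠ 0)
    (hstrict : StrictConvexOn ℝ (Set.Icc c 0) F ∨ StrictConvexOn ℝ (Set.Icc c 0) R)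
    (B : ℝ → ℝ) (hB0 : B 0 = 0)
    (hBode : ∀ x ≥ (0:ℝ), HasDerivAt B (R (B x) - 1) x)
    (hBanti : StrictAntiOn B (Set.Ici 0))
    (hBrange : ∀ x ≥ (0:ℝ), B x ∈ Set.Ioc c 0)
    (hBlim : Tendsto B atTop (nhds c))
    (A : ℝ → ℝ) (hA : ∀ x, A x = ∫ s in (0:ℝ)..x, F (B s))
    (r : ℝ) (Y : ℝ → ℝ → ℝ)
    (hY : ∀ x r', Y x r' = -(A x + r' * B x) / x)
    (hP4 : (0 ≤ r ∧ 0 < deriv F 0) ∨ (∀ u, R u = u / c))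
    (hr : (1 / c) * (∫ u in c..(0:ℝ), (F u - F c) / (R u - 1)) < r)
    (hrinv : deriv R 0 < 0 → r < -(deriv F 0) / deriv R 0) :
    ∃! xstar : ℝ, 0 < xstar ∧
      StrictMonoOn (fun x => Y x r) (Set.Ioc 0 xstar) ∧
      StrictAntiOn (fun x => Y x r) (Set.Ici xstar) := by
  -- ## Setup
  have hUopen : IsOpen (Set.Ioo (c - ε) ε) := isOpen_Ioo
  have hIccU : Icc c 0 ⊆ Set.Ioo (c - ε) ε :=
    fun u hu => ⟨by linarith [hu.1], lt_of_le_of_lt hu.2 hε⟩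
  have h0U : (0:ℝ) ∈ Set.Ioo (c - ε) ε := ⟨by linarith, hε⟩
  have hcU : c ∈ Set.Ioo (c - ε) ε := ⟨by linarith, by linarith⟩
  have hBmemU : ∀ x ≥ (0:ℝ), B x ∈ Set.Ioo (c - ε) ε :=
    fun x hx => hIccU (Ioc_subset_Icc_self (hBrange x hx))
  have hFd : ∀ u ∈ Set.Ioo (c - ε) ε, DifferentiableAt ℝ F u := fun u hu =>
    (hFC1.differentiableOn one_ne_zero).differentiableAt (hUopen.mem_nhds hu)
  have hRd : ∀ u ∈ Set.Ioo (c - ε) ε, DifferentiableAt ℝ R u := fun u hu =>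
    (hRC1.differentiableOn one_ne_zero).differentiableAt (hUopen.mem_nhds hu)
  have hF'cont : ContinuousOn (deriv F) (Set.Ioo (c - ε) ε) :=
    hFC1.continuousOn_deriv_of_isOpen hUopen le_rfl
  have hR'cont : ContinuousOn (deriv R) (Set.Ioo (c - ε) ε) :=
    hRC1.continuousOn_deriv_of_isOpen hUopen le_rfl
  have hBcont : ∀ x ≥ (0:ℝ), ContinuousAt B x := fun x hx => (hBode x hx).continuousAt
  have hBcontOn : ContinuousOn B (Ici 0) := fun x hx => (hBcont x hx).continuousWithinAt
  -- the slope function φ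
  set φ : ℝ → ℝ := fun u => deriv F u + r * deriv R u with hφdef
  have hφmono : MonotoneOn φ (Set.Ioo (c - ε) ε) := by
    rcases hP4 with ⟨hr0, _⟩ | hlin
    · intro u hu v hv huv
      exact add_le_add (hFconv.monotoneOn_deriv hFd hu hv huv)
        (mul_le_mul_of_nonneg_left (hRconv.monotoneOn_deriv hRd hu hv huv) hr0)
    · have hRfun : R = fun u => u / c := funext hlin
      have hdR : ∀ u, deriv R u = 1 / c := by
        intro u
        have h : HasDerivAt R (1 / c) u := by
          rw [hRfun]; simpa using (hasDerivAt_id u).div_const c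
        exact h.deriv
      intro u hu v hv huv
      simp only [hφdef, hdR]
      exact add_le_add (hFconv.monotoneOn_deriv hFd hu hv huv) le_rfl
  have hφ0 : 0 < φ 0 := by
    rcases hP4 with ⟨hr0, hF'0⟩ | hlin
    · rcases lt_or_ge (deriv R 0) 0 with hneg | hpos
      · have := hrinv hneg
        have h2 : -(deriv F 0) < r * deriv R 0 := (lt_div_iff_of_neg hneg).mp this
        simp only [hφdef]; linarith
      · have : 0 ≤ r * deriv R 0 := mul_nonneg hr0 hpos
        simp only [hφdef]; linarith
    · have hRfun : R = fun u => u / c := funext hlin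
      have hdR : deriv R 0 = 1 / c := by
        have h : HasDerivAt R (1 / c) 0 := by
          rw [hRfun]; simpa using (hasDerivAt_id (0:ℝ)).div_const c
        exact h.deriv
      have hneg : deriv R 0 < 0 := by rw [hdR]; exact div_neg_of_pos_of_neg one_pos hc
      have := hrinv hneg
      have h2 : -(deriv F 0) < r * deriv R 0 := (lt_div_iff_of_neg hneg).mp this
      simp only [hφdef]; linarith
  have hφcont : ContinuousOn φ (Set.Ioo (c - ε) ε) :=
    hF'cont.add (continuousOn_const.mul hR'cont)
  -- q = φ ∘ B
  set q : ℝ → ℝ := fun x => φ (B x) with hqdef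
  have hq0 : 0 < q 0 := by simpa [hqdef, hB0] using hφ0
  have hqanti : AntitoneOn q (Ici 0) := by
    intro x hx y hy hxy
    rcases eq_or_lt_of_le hxy with rfl | hlt
    · exact le_rfl
    · exact hφmono (hBmemU y hy) (hBmemU x hx) (hBanti hx hy hlt).le
  have hqcont : ContinuousOn q (Ici 0) :=
    hφcont.comp hBcontOn (fun x hx => hBmemU x hx)
  -- basic sign facts
  have hBrange' : ∀ x > (0:ℝ), B x ∈ Set.Ioo c 0 := by
    intro x hx
    refine ⟨(hBrange x hx.le).1, ?_⟩
    have := hBanti self_mem_Ici (le_of_lt hx : (0:ℝ) ≤ x) hx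
    rwa [hB0] at this
  have hRB1 : ∀ x ≥ (0:ℝ), R (B x) - 1 < 0 :=
    fun x hx => sub_neg.mpr (hRlt1 _ (hBrange x hx))
  -- ## Slope bounds from convexity
  have hucpos : ∀ u ∈ Ioc c 0, 0 < u - c := fun u hu => sub_pos.mpr hu.1
  have hRslope : ∀ u ∈ Ioc c 0, R u - 1 ≤ (u - c) / c := by
    intro u hu
    have hu' : u ∈ Set.Ioo (c - ε) ε := hIccU (Ioc_subset_Icc_self hu)
    rcases eq_or_lt_of_le hu.2 with rfl | hu2
    · rw [hR0, zero_sub, zero_sub, neg_div, div_self hc.ne]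
    · have hs := hRconv.secant_mono hcU hu' h0U (ne_of_gt hu.1) hc.ne' hu.2
      rw [hRc, hR0] at hs
      have heq : (0 - 1) / (0 - c) = 1 / c := by
        rw [zero_sub, zero_sub, neg_div_neg_eq]
      rw [heq] at hs
      have h2 := (div_le_iff₀ (hucpos u hu)).mp hs
      calc R u - 1 ≤ 1 / c * (u - c) := h2
        _ = (u - c) / c := by ring
  have hRslope' : ∀ u ∈ Ioc c 0, deriv R c * (u - c) ≤ R u - 1 := by
    intro u hu
    have hu' : u ∈ Set.Ioo (c - ε) ε := hIccU (Ioc_subset_Icc_self hu)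
    have hs := hRconv.deriv_le_slope hcU hu' hu.1 (hRd c hcU)
    rw [slope_def_field, hRc] at hs
    have := (le_div_iff₀ (hucpos u hu)).mp hs
    linarith

  -- ## bound on F slopes
  set M : ℝ := max |deriv F c| |deriv F 0| with hMdef
  have hM0 : 0 ≤ M := le_trans (abs_nonneg _) (le_max_left _ _)
  have hFbound : ∀ u ∈ Ioc c 0, |F u - F c| ≤ M * (u - c) := by
    intro u hu
    have hu' : u ∈ Set.Ioo (c - ε) ε := hIccU (Ioc_subset_Icc_self hu)
    have h1 : deriv F c ≤ slope F c u := hFconv.deriv_le_slope hcU hu' hu.1 (hFd c hcU)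
    have h2 : slope F c u ≤ deriv F u := hFconv.slope_le_deriv hcU hu' hu.1 (hFd u hu')
    have h3 : deriv F u ≤ deriv F 0 := hFconv.monotoneOn_deriv hFd hu' h0U hu.2
    rw [slope_def_field] at h1 h2
    have habs : |(F u - F c) / (u - c)| ≤ M := by
      rw [abs_le]
      constructor
      · calc -M ≤ -|deriv F c| := neg_le_neg (le_max_left _ _)
          _ ≤ deriv F c := neg_abs_le _
          _ ≤ (F u - F c) / (u - c) := h1
      · calc (F u - F c) / (u - c) ≤ deriv F 0 := le_trans h2 h3
          _ ≤ |deriv F 0| := le_abs_self _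
          _ ≤ M := le_max_right _ _
    have hpos := hucpos u hu
    calc |F u - F c| = |(F u - F c) / (u - c)| * (u - c) := by
          rw [abs_div, abs_of_pos hpos]
          field_simp
      _ ≤ M * (u - c) := mul_le_mul_of_nonneg_right habs hpos.le
  -- ## the function h and its primitive Φ
  set h : ℝ → ℝ := fun u => (F u - F c) / (R u - 1) with hhdef
  have hRne1 : ∀ u ∈ Ioc c 0, R u - 1 ≠ 0 := fun u hu => sub_ne_zero.mpr (hRlt1 u hu).ne
  have hRsub : ∀ u ∈ Ioc c 0, (u - c) / (-c) ≤ |R u - 1| := by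
    intro u hu
    have h1 := hRslope u hu
    have : 0 < 1 - R u := by linarith [hRlt1 u hu]
    rw [abs_of_neg (by linarith : R u - 1 < 0)]
    have : (u - c) / (-c) = -((u - c) / c) := by rw [div_neg]
    rw [this]
    linarith
  have hhbound : ∀ u ∈ Ioc c 0, |h u| ≤ M * (-c) := by
    intro u hu
    have hpos := hucpos u hu
    have hd : 0 < (u - c) / (-c) := div_pos hpos (by linarith)
    rw [hhdef]
    simp only [abs_div]
    calc |F u - F c| / |R u - 1| ≤ (M * (u - c)) / ((u - c) / (-c)) :=
          div_le_div₀ (by positivity) (hFbound u hu) hd (hRsub u hu)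
      _ = M * (-c) := by field_simp
  have hhcontAt : ∀ u ∈ Ioc c 0, ContinuousAt h u := by
    intro u hu
    have hu' : u ∈ Set.Ioo (c - ε) ε := hIccU (Ioc_subset_Icc_self hu)
    exact (((hFd u hu').continuousAt).sub continuousAt_const).div
      (((hRd u hu').continuousAt).sub continuousAt_const) (hRne1 u hu)
  have hhcontOn : ContinuousOn h (Ioc c 0) := fun u hu => (hhcontAt u hu).continuousWithinAt
  have hhmeas : MeasureTheory.AEStronglyMeasurable h (MeasureTheory.volume.restrict (Ioc c 0)) :=
    hhcontOn.aestronglyMeasurable measurableSet_Ioc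
  have hhint : MeasureTheory.IntegrableOn h (Ioc c 0) := by
    refine MeasureTheory.Integrable.mono' (g := fun _ => M * (-c)) ?_ hhmeas ?_
    · exact MeasureTheory.integrableOn_const measure_Ioc_lt_top.ne
    · rw [MeasureTheory.ae_restrict_iff' measurableSet_Ioc]
      exact MeasureTheory.ae_of_all _ (fun u hu => hhbound u hu)
  have hhii : ∀ v ∈ Icc c 0, IntervalIntegrable h MeasureTheory.volume 0 v := by
    intro v hv
    rw [intervalIntegrable_iff]
    refine hhint.mono_set ?_
    rw [uIoc_of_ge hv.2]
    exact Ioc_subset_Ioc_left hv.1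
  set Φ : ℝ → ℝ := fun v => ∫ u in (0:ℝ)..v, h u with hΦdef
  -- open set where h is continuous
  have hWopen : IsOpen ((Set.Ioo (c - ε) ε) ∩ (fun u => R u - 1) ⁻¹' {x | x ≠ 0}) := by
    refine ContinuousOn.isOpen_inter_preimage ?_ hUopen (isOpen_ne)
    exact (hRC1.continuousOn.sub continuousOn_const)
  have hIocW : Ioc c 0 ⊆ (Set.Ioo (c - ε) ε) ∩ (fun u => R u - 1) ⁻¹' {x | x ≠ 0} :=
    fun u hu => ⟨hIccU (Ioc_subset_Icc_self hu), hRne1 u hu⟩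
  have hhcontW : ContinuousOn h ((Set.Ioo (c - ε) ε) ∩ (fun u => R u - 1) ⁻¹' {x | x ≠ 0}) := by
    intro u hu
    exact (((((hFd u hu.1).continuousAt).sub continuousAt_const).div
      (((hRd u hu.1).continuousAt).sub continuousAt_const) hu.2)).continuousWithinAt
  have hΦderiv : ∀ v ∈ Ioc c 0, HasDerivAt Φ (h v) v := by
    intro v hv
    exact intervalIntegral.integral_hasDerivAt_right (hhii v (Ioc_subset_Icc_self hv))
      (hhcontW.stronglyMeasurableAtFilter hWopen _ (hIocW hv)) (hhcontAt v hv)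
  have hΦcont : ContinuousOn Φ (Icc c 0) := by
    have h1 : IntervalIntegrable h MeasureTheory.volume c 0 := (hhii c ⟨le_rfl, hc.le⟩).symm
    have h2 : (0:ℝ) ∈ uIcc c 0 := by rw [uIcc_of_le hc.le]; exact ⟨hc.le, le_rfl⟩
    have h3 := intervalIntegral.continuousOn_primitive_interval' h1 h2
    rwa [uIcc_of_le hc.le] at h3

  -- ## A and its derivative
  have hAfun : A = fun x => ∫ s in (0:ℝ)..x, F (B s) := funext hA
  have hFBcontAt : ∀ x ≥ (0:ℝ), ContinuousAt (fun s => F (B s)) x :=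
    fun x hx => ((hFd _ (hBmemU x hx)).continuousAt).comp (hBcont x hx)
  have hFBii : ∀ x ≥ (0:ℝ), IntervalIntegrable (fun s => F (B s)) MeasureTheory.volume 0 x := by
    intro x hx
    apply ContinuousOn.intervalIntegrable
    rw [uIcc_of_le hx]
    exact fun s hs => (hFBcontAt s hs.1).continuousWithinAt
  have hFBmeas : ∀ x > (0:ℝ), StronglyMeasurableAtFilter (fun s => F (B s)) (nhds x)
      MeasureTheory.volume := by
    intro x hx
    refine ContinuousOn.stronglyMeasurableAtFilter isOpen_Ioi ?_ x hx
    exact fun s hs => (hFBcontAt s (le_of_lt hs)).continuousWithinAt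
  have hAderiv : ∀ x > (0:ℝ), HasDerivAt A (F (B x)) x := by
    intro x hx
    rw [hAfun]
    exact intervalIntegral.integral_hasDerivAt_right (hFBii x hx.le) (hFBmeas x hx)
      (hFBcontAt x hx.le)
  have hA0 : A 0 = 0 := by rw [hA 0, intervalIntegral.integral_same]
  have hAcont : ContinuousOn A (Ici 0) := by
    intro x hx
    rcases eq_or_lt_of_le (mem_Ici.mp hx) with rfl | hx'
    · have h1 : IntervalIntegrable (fun s => F (B s)) MeasureTheory.volume 0 1 :=
        hFBii 1 zero_le_one
      have h2 : (0:ℝ) ∈ uIcc (0:ℝ) 1 := left_mem_uIcc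
      have h3 := intervalIntegral.continuousOn_primitive_interval' h1 h2
      rw [uIcc_of_le zero_le_one] at h3
      have h4 : ContinuousWithinAt A (Icc 0 1) 0 := by
        rw [hAfun]; exact h3 0 ⟨le_rfl, zero_le_one⟩
      refine h4.mono_of_mem_nhdsWithin ?_
      rw [← Ici_inter_Iic]
      exact inter_mem_nhdsWithin _ (Iic_mem_nhds zero_lt_one)
    · exact ((hAderiv x hx').continuousAt).continuousWithinAt
  -- ## the key identity A x = x * F c + Φ (B x)
  have hΦBcontAt : ∀ x ≥ (0:ℝ), ContinuousAt (fun y => Φ (B y)) x :=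
    fun x hx => ((hΦderiv _ (hBrange x hx)).continuousAt).comp (hBcont x hx)
  have hΦBderiv : ∀ x ≥ (0:ℝ), HasDerivAt (fun y => Φ (B y)) (h (B x) * (R (B x) - 1)) x :=
    fun x hx => (hΦderiv _ (hBrange x hx)).comp x (hBode x hx)
  have hAid : ∀ x ∈ Ici (0:ℝ), A x = x * F c + Φ (B x) := by
    set D : ℝ → ℝ := fun x => A x - (x * F c + Φ (B x)) with hDdef
    have hDcont : ContinuousOn D (Ici 0) := by
      refine hAcont.sub (ContinuousOn.add ?_ ?_)
      · exact continuousOn_id.mul continuousOn_const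
      · exact fun x hx => (hΦBcontAt x hx).continuousWithinAt
    have hDderiv : ∀ x ∈ Ioi (0:ℝ), HasDerivAt D 0 x := by
      intro x hx
      have h1 := hAderiv x hx
      have h2 : HasDerivAt (fun y => y * F c + Φ (B y)) (F c + h (B x) * (R (B x) - 1)) x := by
        refine HasDerivAt.add ?_ (hΦBderiv x (le_of_lt hx))
        simpa using (hasDerivAt_id x).mul_const (F c)
      have h3 := h1.sub h2
      have h4 : h (B x) * (R (B x) - 1) = F (B x) - F c := by
        rw [hhdef]
        exact div_mul_cancel₀ _ (hRne1 _ (hBrange x (le_of_lt hx)))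
      have h5 : F (B x) - (F c + h (B x) * (R (B x) - 1)) = 0 := by rw [h4]; ring
      rw [h5] at h3
      exact h3
    have hD0 : D 0 = 0 := by
      simp only [hDdef, hA0, hB0, hΦdef, intervalIntegral.integral_same]
      ring
    intro x hx
    have := constOn_Ici hDcont hDderiv x hx
    rw [hD0] at this
    have : A x - (x * F c + Φ (B x)) = 0 := this
    linarith
  -- ## Groenwall-type exponential bound
  set k : ℝ := -1 / c with hkdef
  have hk : 0 < k := by rw [hkdef]; exact div_pos_of_neg_of_neg (by norm_num) hc

  have hexpD : ∀ x : ℝ, HasDerivAt (fun y => Real.exp (k * y)) (Real.exp (k * x) * k) x := by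
    intro x
    have h1 : HasDerivAt (fun y : ℝ => k * y) k x := by
      simpa using (hasDerivAt_id x).const_mul k
    exact (Real.hasDerivAt_exp (k * x)).comp x h1
  set w : ℝ → ℝ := fun x => (B x - c) * Real.exp (k * x) with hwdef
  have hwD : ∀ x ≥ (0:ℝ), HasDerivAt w
      ((R (B x) - 1) * Real.exp (k * x) + (B x - c) * (Real.exp (k * x) * k)) x :=
    fun x hx => ((hBode x hx).sub_const c).mul (hexpD x)
  have hwanti : AntitoneOn w (Ici 0) := by
    refine antitoneOn_of_deriv_nonpos (convex_Ici 0) ?_ ?_ ?_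
    · exact fun x hx => ((hwD x hx).continuousAt).continuousWithinAt
    · rw [interior_Ici]
      exact fun x hx => ((hwD x (le_of_lt hx)).differentiableAt).differentiableWithinAt
    · rw [interior_Ici]
      intro x hx
      rw [(hwD x (le_of_lt hx)).deriv]
      have h1 : R (B x) - 1 ≤ (B x - c) / c := hRslope _ (hBrange x (le_of_lt hx))
      have h2 : (B x - c) / c = -(k * (B x - c)) := by
        rw [hkdef]; field_simp
      have h3 : 0 < Real.exp (k * x) := Real.exp_pos _
      nlinarith [h3, h1, h2]
  have hBub : ∀ x ≥ (0:ℝ), B x - c ≤ (-c) * Real.exp (-(k * x)) := by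
    intro x hx
    have h1 : w x ≤ w 0 := hwanti self_mem_Ici hx hx
    have h2 : w 0 = -c := by
      simp only [hwdef, hB0, mul_zero, Real.exp_zero, mul_one]; ring
    rw [h2] at h1
    have h3 := mul_le_mul_of_nonneg_right h1 (Real.exp_nonneg (-(k * x)))
    calc B x - c = (B x - c) * (Real.exp (k * x) * Real.exp (-(k * x))) := by
          rw [← Real.exp_add, add_neg_cancel, Real.exp_zero, mul_one]
      _ = w x * Real.exp (-(k * x)) := by rw [hwdef]; ring
      _ ≤ -c * Real.exp (-(k * x)) := h3
  have hBnn : ∀ x ≥ (0:ℝ), 0 ≤ B x - c := fun x hx => sub_nonneg.mpr (hBrange x hx).1.le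
  -- x * exp (-k x) → 0
  have hexp1 : Tendsto (fun x => x * Real.exp (-(k * x))) atTop (nhds 0) := by
    have h1 := Real.tendsto_pow_mul_exp_neg_atTop_nhds_zero 1
    have h2 : Tendsto (fun x : ℝ => k * x) atTop atTop :=
      Tendsto.const_mul_atTop hk tendsto_id
    have h3 := h1.comp h2
    have h4 := h3.const_mul (1 / k)
    rw [mul_zero] at h4
    refine h4.congr (fun x => ?_)
    simp only [Function.comp]
    field_simp
  have hxB : Tendsto (fun x => x * (B x - c)) atTop (nhds 0) := by
    have hup := hexp1.const_mul (-c)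
    rw [mul_zero] at hup
    refine tendsto_of_tendsto_of_tendsto_of_le_of_le' tendsto_const_nhds hup ?_ ?_
    · filter_upwards [eventually_ge_atTop (0:ℝ)] with x hx
      exact mul_nonneg hx (hBnn x hx)
    · filter_upwards [eventually_ge_atTop (0:ℝ)] with x hx
      calc x * (B x - c) ≤ x * (-c * Real.exp (-(k * x))) :=
            mul_le_mul_of_nonneg_left (hBub x hx) hx
        _ = -c * (x * Real.exp (-(k * x))) := by ring
  have hxF : Tendsto (fun x => x * (F (B x) - F c)) atTop (nhds 0) := by
    have hg := hxB.const_mul M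
    rw [mul_zero] at hg
    refine squeeze_zero_norm' ?_ hg
    filter_upwards [eventually_ge_atTop (0:ℝ)] with x hx
    rw [Real.norm_eq_abs, abs_mul, abs_of_nonneg hx]
    calc x * |F (B x) - F c| ≤ x * (M * (B x - c)) :=
          mul_le_mul_of_nonneg_left (hFbound _ (hBrange x hx)) hx
      _ = M * (x * (B x - c)) := by ring
  have hxR : Tendsto (fun x => x * (R (B x) - 1)) atTop (nhds 0) := by
    have hg := hxB.const_mul (-(deriv R c))
    rw [mul_zero] at hg
    refine squeeze_zero_norm' ?_ hg
    filter_upwards [eventually_ge_atTop (0:ℝ)] with x hx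
    rw [Real.norm_eq_abs, abs_mul, abs_of_nonneg hx]
    have h1 := hRslope' _ (hBrange x hx)
    have h2 : |R (B x) - 1| = -(R (B x) - 1) := abs_of_neg (hRB1 x hx)
    calc x * |R (B x) - 1| ≤ x * (-(deriv R c) * (B x - c)) := by
          refine mul_le_mul_of_nonneg_left ?_ hx
          rw [h2]; linarith
      _ = -(deriv R c) * (x * (B x - c)) := by ring
  have hΦB : Tendsto (fun x => Φ (B x)) atTop (nhds (Φ c)) := by
    have h1 : Tendsto B atTop (nhdsWithin c (Icc c 0)) := by
      rw [tendsto_nhdsWithin_iff]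
      refine ⟨hBlim, ?_⟩
      filter_upwards [eventually_ge_atTop (0:ℝ)] with x hx
      exact Ioc_subset_Icc_self (hBrange x hx)
    exact ((hΦcont c ⟨le_rfl, hc.le⟩).tendsto).comp h1
  -- ## the function G and its limit
  set G : ℝ → ℝ := fun x => A x + r * B x - x * (F (B x) + r * (R (B x) - 1)) with hGdef
  have hG0 : G 0 = 0 := by simp [hGdef, hA0, hB0]
  have hGeq : ∀ x ∈ Ici (0:ℝ), G x =
      Φ (B x) + r * B x - x * (F (B x) - F c) - r * (x * (R (B x) - 1)) := by
    intro x hx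
    rw [hGdef]
    simp only
    rw [hAid x hx]
    ring
  have hGlim : Tendsto G atTop (nhds (Φ c + r * c)) := by
    have h1 : Tendsto (fun x => Φ (B x) + r * B x - x * (F (B x) - F c)
        - r * (x * (R (B x) - 1))) atTop (nhds (Φ c + r * c - 0 - r * 0)) := by
      exact ((hΦB.add (hBlim.const_mul r)).sub hxF).sub (hxR.const_mul r)
    rw [mul_zero, sub_zero, sub_zero] at h1
    refine Tendsto.congr' ?_ h1
    filter_upwards [eventually_ge_atTop (0:ℝ)] with x hx
    exact (hGeq x hx).symm
  have hΦc : Φ c = -∫ u in c..(0:ℝ), h u := by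
    rw [hΦdef]
    simp only
    rw [intervalIntegral.integral_symm]
  have hlneg : Φ c + r * c < 0 := by
    have h1 : r * c < (1 / c * ∫ u in c..(0:ℝ), h u) * c := by
      exact mul_lt_mul_of_neg_right hr hc
    have hc0 : c ≠ 0 := hc.ne
    have h2 : (1 / c * ∫ u in c..(0:ℝ), h u) * c = ∫ u in c..(0:ℝ), h u := by
      field_simp
    rw [h2] at h1
    rw [hΦc]
    linarith
  have hGneg : ∀ᶠ x in atTop, G x < 0 := hGlim.eventually_lt_const hlneg

  -- ## derivative of G
  have hRBcontAt : ∀ x ≥ (0:ℝ), ContinuousAt (fun s => R (B s)) x :=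
    fun x hx => ((hRd _ (hBmemU x hx)).continuousAt).comp (hBcont x hx)
  set gd : ℝ → ℝ := fun x => x * q x * (1 - R (B x)) with hgddef
  have hGderiv : ∀ x > (0:ℝ), HasDerivAt G (gd x) x := by
    intro x hx
    have hFB : HasDerivAt (fun y => F (B y)) (deriv F (B x) * (R (B x) - 1)) x :=
      ((hFd _ (hBmemU x hx.le)).hasDerivAt).comp x (hBode x hx.le)
    have hRB : HasDerivAt (fun y => R (B y)) (deriv R (B x) * (R (B x) - 1)) x :=
      ((hRd _ (hBmemU x hx.le)).hasDerivAt).comp x (hBode x hx.le)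
    have hψ : HasDerivAt (fun y => F (B y) + r * (R (B y) - 1))
        (deriv F (B x) * (R (B x) - 1) + r * (deriv R (B x) * (R (B x) - 1))) x :=
      hFB.add ((hRB.sub_const 1).const_mul r)
    have hprod : HasDerivAt (fun y => y * (F (B y) + r * (R (B y) - 1)))
        (1 * (F (B x) + r * (R (B x) - 1)) + x * (deriv F (B x) * (R (B x) - 1)
          + r * (deriv R (B x) * (R (B x) - 1)))) x :=
      (hasDerivAt_id x).mul hψ
    have hsum : HasDerivAt (fun y => A y + r * B y)
        (F (B x) + r * (R (B x) - 1)) x :=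
      (hAderiv x hx).add ((hBode x hx.le).const_mul r)
    have h := hsum.sub hprod
    have heq : F (B x) + r * (R (B x) - 1) - (1 * (F (B x) + r * (R (B x) - 1))
        + x * (deriv F (B x) * (R (B x) - 1) + r * (deriv R (B x) * (R (B x) - 1))))
        = gd x := by
      simp only [hgddef, hqdef, hφdef]
      ring
    rw [heq] at h
    exact h
  have hGcont : ContinuousOn G (Ici 0) := by
    refine ContinuousOn.sub (hAcont.add (continuousOn_const.mul hBcontOn)) ?_
    refine continuousOn_id.mul (ContinuousOn.add ?_ (continuousOn_const.mul
      (ContinuousOn.sub ?_ continuousOn_const)))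
    · exact fun x hx => (hFBcontAt x hx).continuousWithinAt
    · exact fun x hx => (hRBcontAt x hx).continuousWithinAt
  have h1R : ∀ x ≥ (0:ℝ), 0 < 1 - R (B x) := by
    intro x hx; have := hRB1 x hx; linarith
  -- ## starting interval where q > 0
  have hδex : ∃ δ > (0:ℝ), 0 < q δ := by
    have hcw : ContinuousWithinAt q (Ioi 0) 0 :=
      (hqcont 0 self_mem_Ici).mono Ioi_subset_Ici_self
    have hev : ∀ᶠ x in nhdsWithin 0 (Ioi 0), 0 < q x :=
      hcw.eventually (eventually_gt_nhds hq0)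
    have := (hev.and eventually_mem_nhdsWithin).exists
    obtain ⟨δ, h1, h2⟩ := this
    exact ⟨δ, h2, h1⟩
  obtain ⟨δ, hδpos, hqδ⟩ := hδex
  have hqposδ : ∀ x ∈ Icc (0:ℝ) δ, 0 < q x := by
    intro x hx
    exact lt_of_lt_of_le hqδ (hqanti hx.1 (mem_Ici.mpr hδpos.le) hx.2)

  have hIccIci : Icc (0:ℝ) δ ⊆ Ici 0 := fun x hx => hx.1
  have hGmonoδ : StrictMonoOn G (Icc 0 δ) := by
    refine strictMonoOn_of_deriv_pos (convex_Icc 0 δ) (hGcont.mono hIccIci) ?_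
    rw [interior_Icc]
    intro x hx
    rw [(hGderiv x hx.1).deriv]
    have h1 := hqposδ x ⟨hx.1.le, hx.2.le⟩
    have h2 := h1R x hx.1.le
    exact mul_pos (mul_pos hx.1 h1) h2
  have hGposδ : ∀ x ∈ Ioc (0:ℝ) δ, 0 < G x := by
    intro x hx
    have := hGmonoδ (left_mem_Icc.mpr hδpos.le) ⟨hx.1.le, hx.2⟩ hx.1
    rwa [hG0] at this
  -- ## key claim: once G is nonpositive past δ, it decreases strictly
  have hkey : ∀ z, δ ≤ z → G z ≤ 0 → q z < 0 ∧ ∀ x, z < x → G x < G z := by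
    intro z hδz hGz
    have hz0 : (0:ℝ) < z := lt_of_lt_of_le hδpos hδz
    have hqz : q z < 0 := by
      by_contra hq
      push_neg at hq
      have hmono : MonotoneOn G (Icc 0 z) := by
        refine monotoneOn_of_deriv_nonneg (convex_Icc 0 z) (hGcont.mono (fun x hx => hx.1)) ?_ ?_
        · rw [interior_Icc]
          exact fun x hx => ((hGderiv x hx.1).differentiableAt).differentiableWithinAt
        · rw [interior_Icc]
          intro x hx
          rw [(hGderiv x hx.1).deriv]
          have hqx : 0 ≤ q x := le_trans hq (hqanti (mem_Ici.mpr hx.1.le)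
            (mem_Ici.mpr hz0.le) hx.2.le)
          have h2 := h1R x hx.1.le
          exact mul_nonneg (mul_nonneg hx.1.le hqx) h2.le
      have h1 : G δ ≤ G z := hmono ⟨hδpos.le, hδz⟩ ⟨hz0.le, le_rfl⟩ hδz
      have h2 : 0 < G δ := hGposδ δ ⟨hδpos, le_rfl⟩
      linarith
    refine ⟨hqz, ?_⟩
    have hanti : StrictAntiOn G (Ici z) := by
      refine strictAntiOn_of_deriv_neg (convex_Ici z) (hGcont.mono (Ici_subset_Ici.mpr hz0.le)) ?_
      rw [interior_Ici]
      intro x hx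
      rw [(hGderiv x (lt_trans hz0 hx)).deriv]
      have hqx : q x ≤ q z := hqanti (mem_Ici.mpr hz0.le)
        (mem_Ici.mpr (le_of_lt (lt_trans hz0 hx))) (le_of_lt hx)
      have h2 := h1R x (le_of_lt (lt_trans hz0 hx))
      have hx0 : (0:ℝ) < x := lt_trans hz0 hx
      have hqx' : q x < 0 := lt_of_le_of_lt hqx hqz
      have : x * q x < 0 := mul_neg_of_pos_of_neg hx0 hqx'
      exact mul_neg_of_neg_of_pos this h2
    exact fun x hx => hanti (self_mem_Ici) (mem_Ici.mpr hx.le) hx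
  -- ## defining xstar
  obtain ⟨x₂, hx₂δ, hGx₂⟩ := (eventually_ge_atTop δ |>.and hGneg).exists
  set Z : Set ℝ := {x | δ ≤ x ∧ G x ≤ 0} with hZdef
  have hZne : Z.Nonempty := ⟨x₂, hx₂δ, hGx₂.le⟩
  have hZbdd : BddBelow Z := ⟨δ, fun z hz => hz.1⟩
  set xstar : ℝ := sInf Z with hxsdef
  have hxsδ : δ ≤ xstar := le_csInf hZne (fun z hz => hz.1)
  have hxspos : 0 < xstar := lt_of_lt_of_le hδpos hxsδ
  have hGpos_before : ∀ x, 0 < x → x < xstar → 0 < G x := by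
    intro x hx0 hxs
    rcases le_or_gt x δ with hle | hlt
    · exact hGposδ x ⟨hx0, hle⟩
    · by_contra hG
      push_neg at hG
      have : x ∈ Z := ⟨hlt.le, hG⟩
      have := csInf_le hZbdd this
      rw [← hxsdef] at this
      linarith
  have hGneg_after : ∀ x, xstar < x → G x < 0 := by
    intro x hxs
    obtain ⟨z, hzZ, hzx⟩ := exists_lt_of_csInf_lt hZne (by rw [← hxsdef]; exact hxs)
    have := (hkey z hzZ.1 hzZ.2).2 x hzx
    linarith [hzZ.2]
  -- ## derivative of the yield curve
  have hYfun : (fun x => Y x r) = fun x => -(A x + r * B x) / x := funext fun x => hY x r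
  have hYderiv : ∀ x > (0:ℝ), HasDerivAt (fun y => Y y r) (G x / x ^ 2) x := by
    intro x hx
    have hnum : HasDerivAt (fun y => -(A y + r * B y))
        (-(F (B x) + r * (R (B x) - 1))) x :=
      ((hAderiv x hx).add ((hBode x hx.le).const_mul r)).neg
    have hdiv := hnum.div (hasDerivAt_id x) (ne_of_gt hx)
    rw [hYfun]
    refine hdiv.congr_deriv ?_
    simp only [hGdef, id_eq]
    field_simp
    ring
  -- ## existence
  have hmono_star : StrictMonoOn (fun x => Y x r) (Ioc 0 xstar) := by
    refine strictMonoOn_of_deriv_pos (convex_Ioc 0 xstar) ?_ ?_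
    · exact fun x hx => ((hYderiv x hx.1).continuousAt).continuousWithinAt
    · rw [interior_Ioc]
      intro x hx
      rw [(hYderiv x hx.1).deriv]
      have hGp := hGpos_before x hx.1 hx.2
      exact div_pos hGp (pow_pos hx.1 2)
  have hanti_star : StrictAntiOn (fun x => Y x r) (Ici xstar) := by
    refine strictAntiOn_of_deriv_neg (convex_Ici xstar) ?_ ?_
    · exact fun x hx => ((hYderiv x (lt_of_lt_of_le hxspos hx)).continuousAt).continuousWithinAt
    · rw [interior_Ici]
      intro x hx
      rw [(hYderiv x (lt_trans hxspos hx)).deriv]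
      have h1 := hGneg_after x hx
      have h2 : (0:ℝ) < x ^ 2 := pow_pos (lt_trans hxspos hx) 2
      exact div_neg_of_neg_of_pos h1 h2
  refine ⟨xstar, ⟨hxspos, hmono_star, hanti_star⟩, ?_⟩
  -- ## uniqueness
  intro y hy
  obtain ⟨hy0, hymono, hyanti⟩ := hy
  by_contra hne
  rcases lt_or_gt_of_ne hne with hlt | hgt
  · -- y < xstar
    have h1 : Y y r < Y xstar r :=
      hmono_star (mem_Ioc.mpr ⟨hy0, hlt.le⟩) (mem_Ioc.mpr ⟨hxspos, le_rfl⟩) hlt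
    have h2 : Y xstar r < Y y r := hyanti self_mem_Ici (mem_Ici.mpr hlt.le) hlt
    linarith
  · -- xstar < y
    have h1 : Y xstar r < Y y r :=
      hymono (mem_Ioc.mpr ⟨hxspos, hgt.le⟩) (mem_Ioc.mpr ⟨hy0, le_rfl⟩) hgt
    have h2 : Y y r < Y xstar r := hanti_star self_mem_Ici (mem_Ici.mpr hgt.le) hgt
    linarith
end

section
/- Suppose R'(0) < 0, r ≥ −F'(0)/R'(0), and the case hypothesis (P4) holds. Then the yield curve x ↦ Y(x,r) is strictly decreasing on (0,∞) (the yield curve is inverse). -/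
open Filter Set

/-- If `R'(0) < 0`, `r ≥ −F'(0)/R'(0)`, and (P4) holds, then the yield curve
`x ↦ Y x r` is strictly decreasing on `(0,∞)` (the yield curve is inverse). -/
theorem yield_curve_inverse
(c : ℝ) (hc : c < 0)
    (F R : ℝ → ℝ) (ε : ℝ) (hε : 0 < ε)
    (hFconv : ConvexOn ℝ (Set.Ioo (c - ε) ε) F)
    (hRconv : ConvexOn ℝ (Set.Ioo (c - ε) ε) R)
    (hFC1 : ContDiffOn ℝ 1 F (Set.Ioo (c - ε) ε))
    (hRC1 : ContDiffOn ℝ 1 R (Set.Ioo (c - ε) ε))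
    (hF0 : F 0 = 0) (hR0 : R 0 = 0) (hRc : R c = 1)
    (hRlt1 : ∀ u ∈ Set.Ioc c 0, R u < 1)
    (hR'c : deriv R c < 0)
    (hFne : ∃ u ∈ Set.Icc c 0, F u ≠ 0)
    (hstrict : StrictConvexOn ℝ (Set.Icc c 0) F ∨ StrictConvexOn ℝ (Set.Icc c 0) R)
    (B : ℝ → ℝ) (hB0 : B 0 = 0)
    (hBode : ∀ x ≥ (0:ℝ), HasDerivAt B (R (B x) - 1) x)
    (hBanti : StrictAntiOn B (Set.Ici 0))
    (hBrange : ∀ x ≥ (0:ℝ), B x ∈ Set.Ioc c 0)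
    (hBlim : Tendsto B atTop (nhds c))
    (A : ℝ → ℝ) (hA : ∀ x, A x = ∫ s in (0:ℝ)..x, F (B s))
    (r : ℝ) (Y : ℝ → ℝ → ℝ)
    (hY : ∀ x r', Y x r' = -(A x + r' * B x) / x)
    (hP4 : (0 ≤ r ∧ 0 < deriv F 0) ∨ (∀ u, R u = u / c))
    (hR'0 : deriv R 0 < 0)
    (hr : -(deriv F 0) / deriv R 0 ≤ r) :
    StrictAntiOn (fun x => Y x r) (Set.Ioi 0) := by
  have hIopen : IsOpen (Set.Ioo (c - ε) ε) := isOpen_Ioo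
  have hssub : Set.Icc c 0 ⊆ Set.Ioo (c - ε) ε := fun u hu =>
    ⟨by linarith [hu.1], lt_of_le_of_lt hu.2 hε⟩
  have hFd : ∀ u ∈ Set.Icc c 0, DifferentiableAt ℝ F u := fun u hu =>
    ((hFC1.differentiableOn one_ne_zero) u (hssub hu)).differentiableAt
      (hIopen.mem_nhds (hssub hu))
  have hRd : ∀ u ∈ Set.Icc c 0, DifferentiableAt ℝ R u := fun u hu =>
    ((hRC1.differentiableOn one_ne_zero) u (hssub hu)).differentiableAt
      (hIopen.mem_nhds (hssub hu))
  have h0mem : (0:ℝ) ∈ Set.Icc c 0 := ⟨hc.le, le_rfl⟩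
  -- Key inequality at 0
  have hkey0 : deriv F 0 + r * deriv R 0 ≤ 0 := by
    have h2 : r * deriv R 0 ≤ -(deriv F 0) := (div_le_iff_of_neg hR'0).mp hr
    linarith
  -- Monotonicity of derivatives from convexity
  have hFmono : MonotoneOn (deriv F) (Set.Icc c 0) :=
    (hFconv.monotoneOn_deriv (fun u hu =>
      ((hFC1.differentiableOn one_ne_zero) u hu).differentiableAt
        (hIopen.mem_nhds hu))).mono hssub
  have hRmono : MonotoneOn (deriv R) (Set.Icc c 0) :=
    (hRconv.monotoneOn_deriv (fun u hu =>
      ((hRC1.differentiableOn one_ne_zero) u hu).differentiableAt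
        (hIopen.mem_nhds hu))).mono hssub
  -- Key negativity of F' + r R' on [c,0)
  have hgneg : ∀ u ∈ Set.Ico c 0, deriv F u + r * deriv R u < 0 := by
    intro u hu
    have huIcc : u ∈ Set.Icc c 0 := ⟨hu.1, hu.2.le⟩
    have hFle : deriv F u ≤ deriv F 0 := hFmono huIcc h0mem hu.2.le
    have hRle : deriv R u ≤ deriv R 0 := hRmono huIcc h0mem hu.2.le
    rcases hP4 with ⟨_, hF'0⟩ | hRlin
    · have hrpos : 0 < r :=
        lt_of_lt_of_le (div_pos_of_neg_of_neg (by linarith) hR'0) hr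
      rcases hstrict with hsF | hsR
      · have hFlt : deriv F u < deriv F 0 :=
          hsF.strictMonoOn_deriv hFd huIcc h0mem hu.2
        have h2 : r * deriv R u ≤ r * deriv R 0 :=
          mul_le_mul_of_nonneg_left hRle hrpos.le
        linarith
      · have hRlt : deriv R u < deriv R 0 :=
          hsR.strictMonoOn_deriv hRd huIcc h0mem hu.2
        have h2 : r * deriv R u < r * deriv R 0 :=
          (mul_lt_mul_iff_right₀ hrpos).mpr hRlt
        linarith
    · -- R is linear
      have hRderiv : ∀ v : ℝ, deriv R v = 1 / c := by
        intro v
        have hRfun : R = fun u => u / c := funext hRlin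
        have : HasDerivAt R (1 / c) v := by
          rw [hRfun]
          simpa using (hasDerivAt_id v).div_const c
        exact this.deriv
      have hsF : StrictConvexOn ℝ (Set.Icc c 0) F := by
        rcases hstrict with h | h
        · exact h
        · exfalso
          have hcm : c ∈ Set.Icc c 0 := ⟨le_rfl, hc.le⟩
          have h2 := h.2 hcm h0mem hc.ne (by norm_num : (0:ℝ) < 1/2)
            (by norm_num : (0:ℝ) < 1/2) (by norm_num)
          rw [hRlin, hRc, hR0] at h2
          simp only [smul_eq_mul, mul_zero, add_zero] at h2
          rw [mul_div_assoc, div_self (ne_of_lt hc)] at h2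
          linarith
      have hFlt : deriv F u < deriv F 0 :=
        hsF.strictMonoOn_deriv hFd huIcc h0mem hu.2
      have h2 : r * deriv R u = r * deriv R 0 := by rw [hRderiv, hRderiv]
      linarith
  -- Continuity of s ↦ F (B s) on [0,∞)
  have hf_c : ∀ x ∈ Set.Ici (0:ℝ), ContinuousAt (fun s => F (B s)) x := by
    intro x hx
    have hBx := hBrange x hx
    have hBmem : B x ∈ Set.Ioo (c - ε) ε := hssub ⟨hBx.1.le, hBx.2⟩
    exact (hFC1.continuousOn.continuousAt (hIopen.mem_nhds hBmem)).comp
      (hBode x hx).continuousAt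
  have hcontIoi : ContinuousOn (fun s => F (B s)) (Set.Ioi (0:ℝ)) :=
    fun x hx => (hf_c x (Set.mem_Ici.mpr (le_of_lt (Set.mem_Ioi.mp hx)))).continuousWithinAt
  have hint : ∀ x : ℝ, 0 ≤ x →
      IntervalIntegrable (fun s => F (B s)) MeasureTheory.volume 0 x := by
    intro x hx
    apply ContinuousOn.intervalIntegrable
    rw [Set.uIcc_of_le hx]
    exact fun s hs => (hf_c s hs.1).continuousWithinAt
  have hAfun : A = fun x => ∫ s in (0:ℝ)..x, F (B s) := funext hA
  have hAderiv : ∀ x : ℝ, 0 < x → HasDerivAt A (F (B x)) x := by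
    intro x hx
    rw [hAfun]
    exact intervalIntegral.integral_hasDerivAt_right (hint x hx.le)
      (hcontIoi.stronglyMeasurableAtFilter isOpen_Ioi x hx) (hf_c x hx.le)
  have hAcont0 : ContinuousWithinAt A (Set.Ici 0) 0 := by
    have hio : MeasureTheory.IntegrableOn (fun s => F (B s))
        (Set.uIcc (0:ℝ) 1) := by
      rw [Set.uIcc_of_le zero_le_one]
      exact ContinuousOn.integrableOn_Icc
        (fun s hs => (hf_c s hs.1).continuousWithinAt)
    have h1 := intervalIntegral.continuousOn_primitive_interval hio
    have h2 : ContinuousWithinAt A (Set.uIcc (0:ℝ) 1) 0 := by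
      rw [hAfun]
      exact h1 0 (by rw [Set.uIcc_of_le zero_le_one]; exact ⟨le_rfl, zero_le_one⟩)
    have hmem : Set.uIcc (0:ℝ) 1 ∈ nhdsWithin 0 (Set.Ici (0:ℝ)) := by
      rw [Set.uIcc_of_le zero_le_one]
      exact Icc_mem_nhdsGE zero_lt_one
    exact h2.mono_of_mem_nhdsWithin hmem
  -- Ψ = derivative of x ↦ A x + r B x
  set Ψ : ℝ → ℝ := fun x => F (B x) + r * (R (B x) - 1) with hΨdef
  have hΨderiv : ∀ x : ℝ, 0 ≤ x →
      HasDerivAt Ψ ((deriv F (B x) + r * deriv R (B x)) * (R (B x) - 1)) x := by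
    intro x hx
    have hBx : B x ∈ Set.Icc c 0 := Set.Ioc_subset_Icc_self (hBrange x hx)
    have hFB : HasDerivAt (fun s => F (B s)) (deriv F (B x) * (R (B x) - 1)) x :=
      (hFd (B x) hBx).hasDerivAt.comp x (hBode x hx)
    have hRB : HasDerivAt (fun s => R (B s)) (deriv R (B x) * (R (B x) - 1)) x :=
      (hRd (B x) hBx).hasDerivAt.comp x (hBode x hx)
    have := hFB.add ((hRB.sub_const 1).const_mul r)
    refine this.congr_deriv ?_
    ring
  set H : ℝ → ℝ := fun x => x * Ψ x - (A x + r * B x) with hHdef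
  have hHderiv : ∀ x : ℝ, 0 < x →
      HasDerivAt H
        (x * ((deriv F (B x) + r * deriv R (B x)) * (R (B x) - 1))) x := by
    intro x hx
    have h1 : HasDerivAt (fun y => y * Ψ y)
        (1 * Ψ x + x * ((deriv F (B x) + r * deriv R (B x)) * (R (B x) - 1))) x :=
      (hasDerivAt_id x).mul (hΨderiv x hx.le)
    have h2 : HasDerivAt (fun y => A y + r * B y)
        (F (B x) + r * (R (B x) - 1)) x :=
      (hAderiv x hx).add ((hBode x hx.le).const_mul r)
    have h3 := h1.sub h2
    refine h3.congr_deriv ?_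
    simp only [hΨdef]
    ring
  have hHcont : ContinuousOn H (Set.Ici 0) := by
    intro x hx
    have hΨc : ContinuousWithinAt (fun y => y * Ψ y) (Set.Ici 0) x :=
      (continuousAt_id.mul (hΨderiv x hx).continuousAt).continuousWithinAt
    have hAc : ContinuousWithinAt A (Set.Ici 0) x := by
      rcases eq_or_lt_of_le (show (0:ℝ) ≤ x from hx) with h | h
      · rw [← h]; exact hAcont0
      · exact (hAderiv x h).continuousAt.continuousWithinAt
    have hBc : ContinuousWithinAt B (Set.Ici 0) x :=
      (hBode x hx).continuousAt.continuousWithinAt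
    exact hΨc.sub (hAc.add (continuousWithinAt_const.mul hBc))
  have hHmono : StrictMonoOn H (Set.Ici 0) := by
    apply strictMonoOn_of_deriv_pos (convex_Ici 0) hHcont
    intro x hx
    rw [interior_Ici] at hx
    rw [(hHderiv x hx).deriv]
    have hBx := hBrange x hx.le
    have hBlt0 : B x < 0 := by
      have := hBanti Set.self_mem_Ici (show x ∈ Set.Ici (0:ℝ) from Set.mem_Ici.mpr hx.le) hx
      rwa [hB0] at this
    have hg := hgneg (B x) ⟨hBx.1.le, hBlt0⟩
    have hR1 : R (B x) - 1 < 0 := sub_neg.mpr (hRlt1 _ hBx)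
    exact mul_pos hx (mul_pos_of_neg_of_neg hg hR1)
  have hH0 : H 0 = 0 := by
    simp [hHdef, hB0, hA 0, intervalIntegral.integral_same]
  have hHpos : ∀ x : ℝ, 0 < x → 0 < H x := by
    intro x hx
    have := hHmono Set.self_mem_Ici (show x ∈ Set.Ici (0:ℝ) from Set.mem_Ici.mpr hx.le) hx
    rwa [hH0] at this
  -- Conclusion
  have hYfun : (fun x => Y x r) = fun x => -(A x + r * B x) / x :=
    funext fun x => hY x r
  rw [hYfun]
  apply strictAntiOn_of_deriv_neg (convex_Ioi 0)
  · intro x hx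
    have hx' : (0:ℝ) < x := hx
    exact (((hAderiv x hx').continuousAt.add
      (continuousAt_const.mul (hBode x hx'.le).continuousAt)).neg.div
      continuousAt_id (ne_of_gt hx')).continuousWithinAt
  · intro x hx
    rw [interior_Ioi] at hx
    have hφ : HasDerivAt (fun y => A y + r * B y) (Ψ x) x :=
      (hAderiv x hx).add ((hBode x hx.le).const_mul r)
    have hd : HasDerivAt (fun y => -(A y + r * B y) / y)
        ((-(Ψ x) * x - -(A x + r * B x) * 1) / x ^ 2) x :=
      hφ.neg.div (hasDerivAt_id x) (ne_of_gt hx)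
    rw [hd.deriv]
    apply div_neg_of_neg_of_pos
    · have heq : -(Ψ x) * x - -(A x + r * B x) * 1 = -(H x) := by
        simp only [hHdef]
        ring
      rw [heq]
      linarith [hHpos x hx]
    · exact pow_pos hx 2
end

section
/- Suppose R'(0) < 0, r ≥ −F'(0)/R'(0), and the case hypothesis (P4) holds. Then the forward curve x ↦ f(x,r) is strictly decreasing on [0,∞) (the forward curve is inverse). -/
open Filter Set

/-- If `R'(0) < 0`, `r ≥ −F'(0)/R'(0)`, and (P4) holds, then the forward curve
`x ↦ f x r` is strictly decreasing on `[0,∞)` (the forward curve is inverse). -/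
theorem forward_curve_inverse
(c : ℝ) (hc : c < 0)
    (F R : ℝ → ℝ) (ε : ℝ) (hε : 0 < ε)
    (hFconv : ConvexOn ℝ (Set.Ioo (c - ε) ε) F)
    (hRconv : ConvexOn ℝ (Set.Ioo (c - ε) ε) R)
    (hFC1 : ContDiffOn ℝ 1 F (Set.Ioo (c - ε) ε))
    (hRC1 : ContDiffOn ℝ 1 R (Set.Ioo (c - ε) ε))
    (hF0 : F 0 = 0) (hR0 : R 0 = 0) (hRc : R c = 1)
    (hRlt1 : ∀ u ∈ Set.Ioc c 0, R u < 1)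
    (hR'c : deriv R c < 0)
    (hFne : ∃ u ∈ Set.Icc c 0, F u ≠ 0)
    (hstrict : StrictConvexOn ℝ (Set.Icc c 0) F ∨ StrictConvexOn ℝ (Set.Icc c 0) R)
    (B : ℝ → ℝ) (hB0 : B 0 = 0)
    (hBode : ∀ x ≥ (0:ℝ), HasDerivAt B (R (B x) - 1) x)
    (hBanti : StrictAntiOn B (Set.Ici 0))
    (hBrange : ∀ x ≥ (0:ℝ), B x ∈ Set.Ioc c 0)
    (hBlim : Tendsto B atTop (nhds c))
    (r : ℝ) (f : ℝ → ℝ → ℝ)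
    (hf : ∀ x r', f x r' = -F (B x) - r' * (R (B x) - 1))
    (hP4 : (0 ≤ r ∧ 0 < deriv F 0) ∨ (∀ u, R u = u / c))
    (hR'0 : deriv R 0 < 0)
    (hr : -(deriv F 0) / deriv R 0 ≤ r) :
    StrictAntiOn (fun x => f x r) (Set.Ici 0) := by
  have hsub : Set.Icc c 0 ⊆ Set.Ioo (c - ε) ε := fun u hu =>
    ⟨by linarith [hu.1], by linarith [hu.2]⟩
  have hopen : IsOpen (Set.Ioo (c - ε) ε) := isOpen_Ioo
  have hFd : ∀ u ∈ Set.Icc c 0, DifferentiableAt ℝ F u := fun u hu =>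
    ((hFC1.differentiableOn one_ne_zero).differentiableAt (hopen.mem_nhds (hsub hu)))
  have hRd : ∀ u ∈ Set.Icc c 0, DifferentiableAt ℝ R u := fun u hu =>
    ((hRC1.differentiableOn one_ne_zero).differentiableAt (hopen.mem_nhds (hsub hu)))
  have hFmono : MonotoneOn (deriv F) (Set.Icc c 0) :=
    (hFconv.subset hsub (convex_Icc c 0)).monotoneOn_deriv hFd
  have hRmono : MonotoneOn (deriv R) (Set.Icc c 0) :=
    (hRconv.subset hsub (convex_Icc c 0)).monotoneOn_deriv hRd
  have h0mem : (0:ℝ) ∈ Set.Icc c 0 := ⟨hc.le, le_rfl⟩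
  -- g(0) ≤ 0
  have hg0 : deriv F 0 + r * deriv R 0 ≤ 0 := by
    rw [div_le_iff_of_neg hR'0] at hr
    linarith
  -- the key inequality on (c,0)
  have key : ∀ u ∈ Set.Ioo c 0, deriv F u + r * deriv R u < 0 := by
    intro u hu
    have humem : u ∈ Set.Icc c 0 := ⟨hu.1.le, hu.2.le⟩
    rcases hP4 with ⟨hr0, hF'0⟩ | hRlin
    · -- r > 0 in this case
      have rpos : 0 < r := lt_of_lt_of_le (div_pos_of_neg_of_neg (by linarith) hR'0) hr
      rcases hstrict with hFs | hRs
      · have h1 : deriv F u < deriv F 0 := hFs.strictMonoOn_deriv hFd humem h0mem hu.2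
        have h2 : deriv R u ≤ deriv R 0 := hRmono humem h0mem hu.2.le
        nlinarith
      · have h1 : deriv F u ≤ deriv F 0 := hFmono humem h0mem hu.2.le
        have h2 : deriv R u < deriv R 0 := hRs.strictMonoOn_deriv hRd humem h0mem hu.2
        nlinarith
    · -- R linear:  R is not strictly convex, so F is
      have hFs : StrictConvexOn ℝ (Set.Icc c 0) F := by
        rcases hstrict with hFs | hRs
        · exact hFs
        · exfalso
          have := hRs.2 ⟨le_rfl, hc.le⟩ h0mem hc.ne (by norm_num : (0:ℝ) < 1/2)
            (by norm_num : (0:ℝ) < 1/2) (by norm_num)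
          rw [hRlin, hRc, hR0] at this
          have hcne : c ≠ 0 := hc.ne
          simp only [smul_eq_mul, mul_zero, mul_one, add_zero] at this
          rw [mul_div_assoc, div_self hcne, mul_one] at this
          linarith
      have hReq : R = fun u => u / c := funext hRlin
      have hderivR : ∀ v : ℝ, deriv R v = 1 / c := by
        intro v
        rw [hReq]
        simp [div_eq_mul_inv, deriv_mul_const]
      have h1 : deriv F u < deriv F 0 := hFs.strictMonoOn_deriv hFd humem h0mem hu.2
      rw [hderivR u]
      rw [hderivR 0] at hg0
      linarith
  -- derivative of the forward curve
  have hDer : ∀ x ≥ (0:ℝ), HasDerivAt (fun x => f x r)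
      (-(deriv F (B x) * (R (B x) - 1)) - r * (deriv R (B x) * (R (B x) - 1))) x := by
    intro x hx
    have hu : B x ∈ Set.Icc c 0 := Set.Ioc_subset_Icc_self (hBrange x hx)
    have hFB : HasDerivAt (fun x => F (B x)) (deriv F (B x) * (R (B x) - 1)) x :=
      (hFd _ hu).hasDerivAt.comp x (hBode x hx)
    have hRB : HasDerivAt (fun x => R (B x)) (deriv R (B x) * (R (B x) - 1)) x :=
      (hRd _ hu).hasDerivAt.comp x (hBode x hx)
    have h : HasDerivAt (fun x => -F (B x) - r * (R (B x) - 1))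
        (-(deriv F (B x) * (R (B x) - 1)) - r * (deriv R (B x) * (R (B x) - 1))) x :=
      hFB.neg.sub (((hRB.sub_const 1).const_mul r))
    have hfun : (fun x => f x r) = fun x => -F (B x) - r * (R (B x) - 1) :=
      funext fun x => hf x r
    rw [hfun]
    exact h
  apply strictAntiOn_of_deriv_neg (convex_Ici 0)
  · exact fun x hx => ((hDer x hx).continuousAt).continuousWithinAt
  · intro x hx
    rw [interior_Ici] at hx
    have hx0 : (0:ℝ) ≤ x := (le_of_lt hx)
    rw [(hDer x hx0).deriv]
    have huIoo : B x ∈ Set.Ioo c 0 := by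
      refine ⟨(hBrange x hx0).1, ?_⟩
      have := hBanti (Set.self_mem_Ici) (Set.mem_Ici.2 hx0) hx
      rwa [hB0] at this
    have hg := key (B x) huIoo
    have hd : R (B x) - 1 < 0 := by
      have := hRlt1 (B x) (hBrange x hx0)
      linarith
    nlinarith [mul_pos_of_neg_of_neg hg hd]
end

section
/- If in addition R'(0) < 0, then the asymptotic long-term yield is strictly smaller than the inversion threshold: −F(c) < −F'(0)/R'(0). -/
open Filter Set

/-- For a function strictly convex on `[c,0]` with `c < 0`, the slope from `c` to `0` is
strictly less than the slope from `c/2` to `0`. -/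
lemma strict_slope_aux {c : ℝ} (hc : c < 0) {f : ℝ → ℝ}
    (hf : StrictConvexOn ℝ (Set.Icc c 0) f) :
    (f 0 - f c) / (0 - c) < (f 0 - f (c/2)) / (0 - c/2) := by
  have h := hf.slope_strict_mono_adjacent
    (x := c) (y := c/2) (z := 0)
    (Set.mem_Icc.2 ⟨le_refl c, hc.le⟩) (Set.mem_Icc.2 ⟨hc.le, le_refl 0⟩)
    (by linarith) (by linarith)
  rw [div_lt_div_iff₀ (by linarith) (by linarith)] at h
  rw [div_lt_div_iff₀ (by linarith) (by linarith)]
  nlinarith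

/-- If in addition `R'(0) < 0`, then the asymptotic long-term yield is strictly
smaller than the inversion threshold: `−F(c) < −F'(0)/R'(0)`. -/
theorem asymp_lt_inv
(c : ℝ) (hc : c < 0)
    (F R : ℝ → ℝ) (ε : ℝ) (hε : 0 < ε)
    (hFconv : ConvexOn ℝ (Set.Ioo (c - ε) ε) F)
    (hRconv : ConvexOn ℝ (Set.Ioo (c - ε) ε) R)
    (hFC1 : ContDiffOn ℝ 1 F (Set.Ioo (c - ε) ε))
    (hRC1 : ContDiffOn ℝ 1 R (Set.Ioo (c - ε) ε))
    (hF0 : F 0 = 0) (hR0 : R 0 = 0) (hRc : R c = 1)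
    (hRlt1 : ∀ u ∈ Set.Ioc c 0, R u < 1)
    (hR'c : deriv R c < 0)
    (hFne : ∃ u ∈ Set.Icc c 0, F u ≠ 0)
    (hstrict : StrictConvexOn ℝ (Set.Icc c 0) F ∨ StrictConvexOn ℝ (Set.Icc c 0) R)
    (hF'0 : (¬ ∀ u, R u = u / c) → 0 < deriv F 0)
    (hR'0 : deriv R 0 < 0) :
    -F c < -(deriv F 0) / deriv R 0 := by
  have h0mem : (0 : ℝ) ∈ Set.Ioo (c - ε) ε := ⟨by linarith, hε⟩
  have hcmem : c ∈ Set.Ioo (c - ε) ε := ⟨by linarith, by linarith⟩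
  have hmmem : c/2 ∈ Set.Ioo (c - ε) ε := ⟨by linarith, by linarith⟩
  have hdiffF : DifferentiableAt ℝ F 0 :=
    ((hFC1.differentiableOn one_ne_zero).differentiableAt (isOpen_Ioo.mem_nhds h0mem))
  have hdiffR : DifferentiableAt ℝ R 0 :=
    ((hRC1.differentiableOn one_ne_zero).differentiableAt (isOpen_Ioo.mem_nhds h0mem))
  have hc0 : (0:ℝ) < 0 - c := by linarith
  -- slope inequalities from convexity
  have hsF : (0 - F c) / (0 - c) ≤ deriv F 0 := by
    have := hFconv.slope_le_deriv hcmem h0mem hc hdiffF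
    rwa [slope_def_field, hF0] at this
  have hsR : ((0:ℝ) - 1) / (0 - c) ≤ deriv R 0 := by
    have := hRconv.slope_le_deriv hcmem h0mem hc hdiffR
    rwa [slope_def_field, hR0, hRc] at this
  -- basic consequences
  have hFc : deriv F 0 * c ≤ F c := by
    rw [div_le_iff₀ hc0] at hsF; nlinarith
  have hRb : deriv R 0 * c ≤ 1 := by
    rw [div_le_iff₀ hc0] at hsR; nlinarith
  -- strict versions when strictly convex
  have hstrictF : StrictConvexOn ℝ (Set.Icc c 0) F → deriv F 0 * c < F c := by
    intro hsf
    have h1 : (F 0 - F c) / (0 - c) < deriv F 0 := by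
      refine lt_of_lt_of_le (strict_slope_aux hc hsf) ?_
      have := hFconv.slope_le_deriv hmmem h0mem (by linarith) hdiffF
      rwa [slope_def_field] at this
    rw [hF0, div_lt_iff₀ hc0] at h1; nlinarith
  have hstrictR : StrictConvexOn ℝ (Set.Icc c 0) R → deriv R 0 * c < 1 := by
    intro hsr
    have h1 : (R 0 - R c) / (0 - c) < deriv R 0 := by
      refine lt_of_lt_of_le (strict_slope_aux hc hsr) ?_
      have := hRconv.slope_le_deriv hmmem h0mem (by linarith) hdiffR
      rwa [slope_def_field] at this
    rw [hR0, hRc, div_lt_iff₀ hc0] at h1; nlinarith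
  by_cases hlin : ∀ u, R u = u / c
  · -- R is linear: then R cannot be strictly convex, so F is
    have hRd : deriv R 0 = 1 / c := by
      have hRe : R = fun u => u / c := funext hlin
      rw [hRe]
      simp [deriv_div_const]
    have hFs : StrictConvexOn ℝ (Set.Icc c 0) F := by
      rcases hstrict with h | h
      · exact h
      · exfalso
        have h2 := h.2 (Set.mem_Icc.2 ⟨le_refl c, hc.le⟩)
          (Set.mem_Icc.2 ⟨hc.le, le_refl 0⟩) (ne_of_lt hc)
          (by norm_num : (0:ℝ) < 1/2) (by norm_num : (0:ℝ) < 1/2) (by norm_num)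
        simp only [smul_eq_mul, mul_zero, add_zero, hRc, hR0] at h2
        rw [hlin (1/2 * c)] at h2
        rw [mul_div_assoc, div_self (ne_of_lt hc)] at h2
        linarith
    have hF := hstrictF hFs
    have he : -deriv F 0 / (1 / c) = -deriv F 0 * c := by
      field_simp
    rw [hRd, he]
    linarith
  · -- R not linear: then F'(0) > 0
    have ha : 0 < deriv F 0 := hF'0 hlin
    rw [lt_div_iff_of_neg hR'0]
    rcases hstrict with h | h
    · have hF := hstrictF h
      nlinarith [mul_pos (sub_pos.2 hF) (neg_pos.2 hR'0),
        mul_nonneg ha.le (sub_nonneg.2 hRb)]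
    · have hR := hstrictR h
      nlinarith [mul_nonneg (sub_nonneg.2 hFc) (neg_pos.2 hR'0).le,
        mul_pos ha (sub_pos.2 hR)]
end

section
/- Define L₁(x) = A(x) − x·F(B(x)) for x ≥ 0. Then for every x ≥ 0 one has L₁(x) = −∫_{B(x)}^0 (F(u) − F(B(x)))/(R(u) − 1) du, and lim_{x→∞} L₁(x) = −∫_c^0 (F(u) − F(c))/(R(u) − 1) du. -/
open Filter Set MeasureTheory intervalIntegral

/-- With `L₁ x = A x − x·F(B x)`, one has
`L₁ x = −∫_{B x}^0 (F u − F (B x))/(R u − 1) du` for all `x ≥ 0`, and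
`lim_{x→∞} L₁ x = −∫_c^0 (F u − F c)/(R u − 1) du`. -/
theorem L1_formula_and_limit
(c : ℝ) (hc : c < 0)
    (F R : ℝ → ℝ) (ε : ℝ) (hε : 0 < ε)
    (hFconv : ConvexOn ℝ (Set.Ioo (c - ε) ε) F)
    (hRconv : ConvexOn ℝ (Set.Ioo (c - ε) ε) R)
    (hFC1 : ContDiffOn ℝ 1 F (Set.Ioo (c - ε) ε))
    (hRC1 : ContDiffOn ℝ 1 R (Set.Ioo (c - ε) ε))
    (hF0 : F 0 = 0) (hR0 : R 0 = 0) (hRc : R c = 1)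
    (hRlt1 : ∀ u ∈ Set.Ioc c 0, R u < 1)
    (hR'c : deriv R c < 0)
    (B : ℝ → ℝ) (hB0 : B 0 = 0)
    (hBode : ∀ x ≥ (0:ℝ), HasDerivAt B (R (B x) - 1) x)
    (hBanti : StrictAntiOn B (Set.Ici 0))
    (hBrange : ∀ x ≥ (0:ℝ), B x ∈ Set.Ioc c 0)
    (hBlim : Tendsto B atTop (nhds c))
    (A : ℝ → ℝ) (hA : ∀ x, A x = ∫ s in (0:ℝ)..x, F (B s))
    (L₁ : ℝ → ℝ) (hL₁ : ∀ x ≥ (0:ℝ), L₁ x = A x - x * F (B x)) :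
    (∀ x ≥ (0:ℝ), L₁ x = -∫ u in (B x)..(0:ℝ), (F u - F (B x)) / (R u - 1)) ∧
    Tendsto L₁ atTop (nhds (-∫ u in c..(0:ℝ), (F u - F c) / (R u - 1))) := by
  -- basic facts
  have hIoo_open : IsOpen (Set.Ioo (c - ε) ε) := isOpen_Ioo
  have hIccsub : Set.Icc c 0 ⊆ Set.Ioo (c - ε) ε := fun u hu =>
    ⟨lt_of_lt_of_le (by linarith) hu.1, lt_of_le_of_lt hu.2 hε⟩
  have hFcont : ContinuousOn F (Set.Ioo (c - ε) ε) := hFC1.continuousOn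
  have hRcont : ContinuousOn R (Set.Ioo (c - ε) ε) := hRC1.continuousOn
  have h0mem : (0:ℝ) ∈ Set.Ioo (c - ε) ε := ⟨by linarith, hε⟩
  -- choose δ > 0, δ ≤ ε such that R u < 1 on Ioo c δ
  have hRcont0 : ContinuousAt R 0 := hRcont.continuousAt (hIoo_open.mem_nhds h0mem)
  have hev : ∀ᶠ u in nhds (0:ℝ), R u < 1 := by
    have : Tendsto R (nhds 0) (nhds (R 0)) := hRcont0
    rw [hR0] at this
    exact this.eventually_lt_const one_pos
  obtain ⟨δ', hδ'pos, hδ'⟩ := Metric.eventually_nhds_iff.1 hev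
  set δ : ℝ := min δ' ε with hδdef
  have hδpos : 0 < δ := lt_min hδ'pos hε
  have hδε : δ ≤ ε := min_le_right _ _
  set S : Set ℝ := Set.Ioo c δ with hSdef
  have hSopen : IsOpen S := isOpen_Ioo
  have hSsub : S ⊆ Set.Ioo (c - ε) ε := fun u hu =>
    ⟨by linarith [hu.1], lt_of_lt_of_le hu.2 hδε⟩
  have hIocS : Set.Ioc c 0 ⊆ S := fun u hu => ⟨hu.1, lt_of_le_of_lt hu.2 hδpos⟩
  have hRne : ∀ u ∈ S, R u - 1 ≠ 0 := by
    intro u hu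
    rcases le_or_gt u 0 with h | h
    · exact sub_ne_zero.2 (ne_of_lt (hRlt1 u ⟨hu.1, h⟩))
    · refine sub_ne_zero.2 (ne_of_lt (hδ' ?_))
      rw [Real.dist_eq, sub_zero, abs_of_pos h]
      exact lt_of_lt_of_le hu.2 (min_le_left _ _)
  -- the two auxiliary integrands
  set f₁ : ℝ → ℝ := fun u => F u / (R u - 1) with hf₁def
  set f₂ : ℝ → ℝ := fun u => 1 / (R u - 1) with hf₂def
  have hf₁c : ContinuousOn f₁ S :=
    (hFcont.mono hSsub).div ((hRcont.mono hSsub).sub continuousOn_const) hRne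
  have hf₂c : ContinuousOn f₂ S :=
    continuousOn_const.div ((hRcont.mono hSsub).sub continuousOn_const) hRne
  set G : ℝ → ℝ := fun b => ∫ u in b..(0:ℝ), f₁ u with hGdef
  set G₂ : ℝ → ℝ := fun b => ∫ u in b..(0:ℝ), f₂ u with hG₂def
  -- FTC derivatives of G, G₂ on S
  have hFTC : ∀ (f : ℝ → ℝ), ContinuousOn f S → ∀ b ∈ S,
      HasDerivAt (fun y => ∫ u in y..(0:ℝ), f u) (-(f b)) b := by
    intro f hf b hb
    have huIcc : Set.uIcc 0 b ⊆ S :=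
      Set.ordConnected_Ioo.uIcc_subset ⟨hc, hδpos⟩ hb
    have hint : IntervalIntegrable f volume 0 b :=
      (hf.mono huIcc).intervalIntegrable
    have hmeas : StronglyMeasurableAtFilter f (nhds b) :=
      hf.stronglyMeasurableAtFilter hSopen b hb
    have hca : ContinuousAt f b := hf.continuousAt (hSopen.mem_nhds hb)
    have h := intervalIntegral.integral_hasDerivAt_right hint hmeas hca
    have heq : (fun y => ∫ u in y..(0:ℝ), f u) = fun y => -∫ u in (0:ℝ)..y, f u := by
      funext y; rw [intervalIntegral.integral_symm]
    rw [heq]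
    exact h.neg
  have hGd : ∀ b ∈ S, HasDerivAt G (-(f₁ b)) b := hFTC f₁ hf₁c
  have hG₂d : ∀ b ∈ S, HasDerivAt G₂ (-(f₂ b)) b := hFTC f₂ hf₂c
  have hGcS : ∀ b ∈ S, ContinuousAt G b := fun b hb => (hGd b hb).continuousAt
  have hG₂cS : ∀ b ∈ S, ContinuousAt G₂ b := fun b hb => (hG₂d b hb).continuousAt
  -- modified B
  set Bt : ℝ → ℝ := fun s => B (max s 0) with hBtdef
  have hBt_eq : ∀ s ≥ (0:ℝ), Bt s = B s := fun s hs => by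
    simp only [hBtdef, max_eq_left hs]
  have hBtr : ∀ s, Bt s ∈ Set.Ioc c 0 := fun s => hBrange _ (le_max_right _ _)
  have hBtcont : Continuous Bt := by
    rw [continuous_iff_continuousAt]
    intro s
    exact ContinuousAt.comp (g := B) (f := fun y : ℝ => max y 0)
      ((hBode _ (le_max_right s 0)).continuousAt)
      ((continuous_id.max continuous_const).continuousAt)
  have hFBtcont : Continuous (fun s => F (Bt s)) := by
    rw [continuous_iff_continuousAt]
    intro s
    exact (hFcont.continuousAt (hIoo_open.mem_nhds
      (hIccsub (Set.Ioc_subset_Icc_self (hBtr s))))).comp hBtcont.continuousAt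
  set At : ℝ → ℝ := fun x => ∫ s in (0:ℝ)..x, F (Bt s) with hAtdef
  have hAtd : ∀ x : ℝ, HasDerivAt At (F (Bt x)) x := by
    intro x
    exact intervalIntegral.integral_hasDerivAt_right
      (hFBtcont.intervalIntegrable _ _)
      (hFBtcont.stronglyMeasurableAtFilter _ _)
      hFBtcont.continuousAt
  have hAeq : ∀ x ≥ (0:ℝ), A x = At x := by
    intro x hx
    rw [hA x]
    apply intervalIntegral.integral_congr
    intro s hs
    have hs0 : 0 ≤ s := by
      rcases hs with ⟨h1, _⟩
      simpa [min_eq_left hx, inf_of_le_left hx] using h1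
    simp [hBt_eq s hs0]
  -- derivative of Bt within Ici x for x ≥ 0
  have hBtd : ∀ x ≥ (0:ℝ), HasDerivWithinAt Bt (R (Bt x) - 1) (Set.Ici x) x := by
    intro x hx
    have h := (hBode x hx).hasDerivWithinAt (s := Set.Ici x)
    have hg : ∀ y ∈ Set.Ici x, Bt y = B y := fun y hy => hBt_eq y (le_trans hx hy)
    have hx' : Bt x = B x := hBt_eq x hx
    rw [hx']
    exact h.congr hg hx'
  have hBtS : ∀ s, Bt s ∈ S := fun s => hIocS (hBtr s)
  -- ψ ≡ 0 on Ici 0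
  have hψ : ∀ x ≥ (0:ℝ), x + G₂ (Bt x) = 0 := by
    intro x₀ hx₀
    have hcontψ : ContinuousOn (fun x => x + G₂ (Bt x)) (Set.Icc 0 x₀) := by
      apply Continuous.continuousOn
      rw [continuous_iff_continuousAt]
      intro s
      exact continuousAt_id.add ((hG₂cS _ (hBtS s)).comp hBtcont.continuousAt)
    have hderiv : ∀ x ∈ Set.Ico 0 x₀,
        HasDerivWithinAt (fun x => x + G₂ (Bt x)) 0 (Set.Ici x) x := by
      intro x hx
      have hB' := hBtd x hx.1
      have hG₂' := (hG₂d _ (hBtS x)).comp_hasDerivWithinAt x hB'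
      have h := (hasDerivWithinAt_id x (Set.Ici x)).add hG₂'
      have : (1 : ℝ) + -f₂ (Bt x) * (R (Bt x) - 1) = 0 := by
        have hne := hRne _ (hBtS x)
        simp only [hf₂def, neg_mul, one_div, inv_mul_cancel₀ hne]
        ring
      rwa [this] at h
    have := constant_of_has_deriv_right_zero hcontψ hderiv x₀ (Set.right_mem_Icc.2 hx₀)
    have h0 : Bt 0 = 0 := by rw [hBt_eq 0 le_rfl, hB0]
    simpa [h0, hG₂def, intervalIntegral.integral_same] using this
  -- W ≡ 0 on Ici 0
  set W : ℝ → ℝ := fun x => At x - x * F (Bt x) + (G (Bt x) - F (Bt x) * G₂ (Bt x))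
    with hWdef
  have hW : ∀ x ≥ (0:ℝ), W x = 0 := by
    intro x₀ hx₀
    have hFBt : ∀ s, ContinuousAt (fun y => F (Bt y)) s := fun s =>
      hFBtcont.continuousAt
    have hcontW : ContinuousOn W (Set.Icc 0 x₀) := by
      apply Continuous.continuousOn
      rw [continuous_iff_continuousAt]
      intro s
      refine (((hAtd s).continuousAt.sub (continuousAt_id.mul (hFBt s))).add
        (ContinuousAt.sub ?_ ((hFBt s).mul ?_)))
      · exact (hGcS _ (hBtS s)).comp hBtcont.continuousAt
      · exact (hG₂cS _ (hBtS s)).comp hBtcont.continuousAt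
    have hderiv : ∀ x ∈ Set.Ico 0 x₀, HasDerivWithinAt W 0 (Set.Ici x) x := by
      intro x hx
      set b : ℝ := Bt x with hbdef
      have hbS : b ∈ S := hBtS x
      have hne : R b - 1 ≠ 0 := hRne _ hbS
      have hB' : HasDerivWithinAt Bt (R b - 1) (Set.Ici x) x := hBtd x hx.1
      have hFd : HasDerivAt F (deriv F b) b :=
        ((hFC1.differentiableOn one_ne_zero).differentiableAt
          (hIoo_open.mem_nhds (hSsub hbS))).hasDerivAt
      have hFB' : HasDerivWithinAt (fun y => F (Bt y)) (deriv F b * (R b - 1))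
          (Set.Ici x) x := hFd.comp_hasDerivWithinAt x hB'
      have hGB' : HasDerivWithinAt (fun y => G (Bt y)) (-(f₁ b) * (R b - 1))
          (Set.Ici x) x := by
          have := (hGd _ hbS).comp_hasDerivWithinAt x hB'; exact this
      have hG₂B' : HasDerivWithinAt (fun y => G₂ (Bt y)) (-(f₂ b) * (R b - 1))
          (Set.Ici x) x := by
          have := (hG₂d _ hbS).comp_hasDerivWithinAt x hB'; exact this
      have hAt' : HasDerivWithinAt At (F b) (Set.Ici x) x :=
        (hAtd x).hasDerivWithinAt
      have hxFB : HasDerivWithinAt (fun y => y * F (Bt y))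
          (1 * F b + x * (deriv F b * (R b - 1))) (Set.Ici x) x :=
        (hasDerivWithinAt_id x _).mul hFB'
      have hprod : HasDerivWithinAt (fun y => F (Bt y) * G₂ (Bt y))
          (deriv F b * (R b - 1) * G₂ b + F b * (-(f₂ b) * (R b - 1)))
          (Set.Ici x) x := hFB'.mul hG₂B'
      have hcomb := (hAt'.sub hxFB).add (hGB'.sub hprod)
      have hψx : G₂ b = -x := by
        have := hψ x hx.1
        linarith [this]
      have hval : F b - (1 * F b + x * (deriv F b * (R b - 1))) +
          (-(f₁ b) * (R b - 1) -
            (deriv F b * (R b - 1) * G₂ b + F b * (-(f₂ b) * (R b - 1)))) = 0 := by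
        rw [hψx]
        simp only [hf₁def, hf₂def]
        field_simp
        ring
      rwa [hval] at hcomb
    have := constant_of_has_deriv_right_zero hcontW hderiv x₀ (Set.right_mem_Icc.2 hx₀)
    have h0 : Bt 0 = 0 := by rw [hBt_eq 0 le_rfl, hB0]
    simpa [hWdef, h0, hF0, hAtdef, hGdef, hG₂def,
      intervalIntegral.integral_same] using this
  -- integral decomposition
  have hdecomp : ∀ b ∈ Set.Ioc c 0,
      (∫ u in b..(0:ℝ), (F u - F b) / (R u - 1)) = G b - F b * G₂ b := by
    intro b hb
    have huIcc : Set.uIcc b 0 ⊆ S :=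
      Set.ordConnected_Ioo.uIcc_subset (hIocS hb) ⟨hc, hδpos⟩
    have h1 : IntervalIntegrable f₁ volume b 0 := (hf₁c.mono huIcc).intervalIntegrable
    have h2 : IntervalIntegrable f₂ volume b 0 := (hf₂c.mono huIcc).intervalIntegrable
    have hpt : ∀ u, (F u - F b) / (R u - 1) = f₁ u - F b * f₂ u := by
      intro u
      simp only [hf₁def, hf₂def]
      ring
    calc (∫ u in b..(0:ℝ), (F u - F b) / (R u - 1))
        = ∫ u in b..(0:ℝ), (f₁ u - F b * f₂ u) := by
          apply intervalIntegral.integral_congr; intro u _; exact hpt u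
      _ = (∫ u in b..(0:ℝ), f₁ u) - ∫ u in b..(0:ℝ), F b * f₂ u :=
          intervalIntegral.integral_sub h1 (h2.const_mul _)
      _ = G b - F b * G₂ b := by
          rw [intervalIntegral.integral_const_mul]
  -- Part 1
  have part1 : ∀ x ≥ (0:ℝ), L₁ x = -∫ u in (B x)..(0:ℝ), (F u - F (B x)) / (R u - 1) := by
    intro x hx
    have hBx : Bt x = B x := hBt_eq x hx
    have hWx := hW x hx
    rw [hL₁ x hx, hAeq x hx, ← hBx, hdecomp (Bt x) (hBtr x)]
    simp only [hWdef] at hWx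
    linarith
  refine ⟨part1, ?_⟩
  -- Part 2: the limit
  -- Lipschitz-type bound for F on Icc c 0
  have hderivFcont : ContinuousOn (deriv F) (Set.Ioo (c - ε) ε) :=
    hFC1.continuousOn_deriv_of_isOpen hIoo_open le_rfl
  obtain ⟨K₀, hK₀⟩ := (isCompact_Icc (a := c) (b := 0)).exists_bound_of_continuousOn
    (hderivFcont.mono hIccsub)
  set K : ℝ := max K₀ 0 with hKdef
  have hK0 : 0 ≤ K := le_max_right _ _
  have hLip : ∀ u ∈ Set.Icc c 0, ∀ b ∈ Set.Icc c 0, |F u - F b| ≤ K * |u - b| := by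
    intro u hu b hb
    have := Convex.norm_image_sub_le_of_norm_hasDerivWithin_le
      (f := F) (f' := deriv F) (s := Set.Icc c 0) (C := K)
      (fun y hy => (((hFC1.differentiableOn one_ne_zero).differentiableAt
        (hIoo_open.mem_nhds (hIccsub hy))).hasDerivAt).hasDerivWithinAt)
      (fun y hy => le_trans (hK₀ y hy) (le_max_left _ _)) (convex_Icc _ _) hb hu
    simpa [Real.norm_eq_abs] using this
  -- chord bound from convexity of R
  have hchord : ∀ u ∈ Set.Icc c 0, R u ≤ u / c := by
    intro u hu
    have hcmem : c ∈ Set.Ioo (c - ε) ε := hIccsub ⟨le_rfl, hc.le⟩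
    have ha : (0:ℝ) ≤ u / c := by
      rw [le_div_iff_of_neg hc]
      simpa using hu.2
    have hb : (0:ℝ) ≤ 1 - u / c := by
      have : u / c ≤ 1 := by
        rw [div_le_iff_of_neg hc]
        linarith [hu.1]
      linarith
    have := hRconv.2 hcmem h0mem ha hb (by ring)
    have heq : (u / c) • c + (1 - u / c) • (0:ℝ) = u := by
      simp only [smul_eq_mul, mul_zero, add_zero]
      exact div_mul_cancel₀ u (ne_of_lt hc)
    rw [heq] at this
    simpa [hRc, hR0] using this
  have honeminus : ∀ u ∈ Set.Ioc c 0, (u - c) / (-c) ≤ 1 - R u := by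
    intro u hu
    have h1 := hchord u (Set.Ioc_subset_Icc_self hu)
    have hcne : c ≠ 0 := ne_of_lt hc
    have h2 : (u - c) / (-c) = 1 - u / c := by
      rw [div_neg, ← neg_div, neg_sub, sub_div, div_self hcne]
    rw [h2]
    linarith
  -- dominated convergence
  set μ : MeasureTheory.Measure ℝ := volume.restrict (Set.Ioc c 0) with hμdef
  set hfun : ℝ → ℝ := fun u => (F u - F c) / (R u - 1) with hhdef
  set Fn : ℝ → ℝ → ℝ := fun x => (Set.Ioc (B x) 0).indicator
      (fun u => (F u - F (B x)) / (R u - 1)) with hFndef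
  have hFRcontIoc : ∀ b : ℝ, ContinuousOn (fun u => (F u - F b) / (R u - 1))
      (Set.Ioc c 0) := by
    intro b
    refine ContinuousOn.div (ContinuousOn.sub (hFcont.mono ?_) continuousOn_const)
      ((hRcont.mono ?_).sub continuousOn_const) ?_
    · exact fun u hu => hIccsub (Set.Ioc_subset_Icc_self hu)
    · exact fun u hu => hIccsub (Set.Ioc_subset_Icc_self hu)
    · exact fun u hu => hRne u (hIocS hu)
  have hmeasF : ∀ᶠ x in atTop, AEStronglyMeasurable (Fn x) μ := by
    apply Eventually.of_forall
    intro x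
    exact ((hFRcontIoc (B x)).aestronglyMeasurable measurableSet_Ioc).indicator
      measurableSet_Ioc
  have hboundF : ∀ᶠ x in atTop, ∀ᵐ u ∂μ, ‖Fn x u‖ ≤ K * (-c) := by
    filter_upwards [eventually_ge_atTop (0:ℝ)] with x hx
    rw [hμdef, MeasureTheory.ae_restrict_iff' measurableSet_Ioc]
    apply MeasureTheory.ae_of_all
    intro u hu
    by_cases hmem : u ∈ Set.Ioc (B x) 0
    · simp only [hFndef, Set.indicator_of_mem hmem]
      set b : ℝ := B x with hb
      have hbIoc : b ∈ Set.Ioc c 0 := hBrange x hx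
      have h1 : |F u - F b| ≤ K * (u - b) := by
        have := hLip u (Set.Ioc_subset_Icc_self hu) b (Set.Ioc_subset_Icc_self hbIoc)
        rwa [abs_of_nonneg (show (0:ℝ) ≤ u - b by linarith [hmem.1.le])] at this
      have h2 : (u - c) / (-c) ≤ 1 - R u := honeminus u hu
      have hden : |R u - 1| = 1 - R u := by
        rw [abs_of_neg (by linarith [hRlt1 u hu])]; ring
      have hucpos : 0 < u - c := by linarith [hu.1]
      have hdenpos : (0:ℝ) < (u - c) / (-c) := div_pos hucpos (by linarith)
      rw [Real.norm_eq_abs, abs_div, hden]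
      calc |F u - F b| / (1 - R u) ≤ (K * (u - c)) / ((u - c) / (-c)) := by
            apply div_le_div₀ (mul_nonneg hK0 (le_of_lt hucpos)) _ hdenpos h2
            refine h1.trans ?_
            have : u - b ≤ u - c := by linarith [hbIoc.1]
            nlinarith
        _ = K * (-c) := by
            rw [div_div_eq_mul_div, mul_right_comm, mul_div_assoc,
              div_self (ne_of_gt hucpos), mul_one]
    · simp only [hFndef, Set.indicator_of_notMem hmem, norm_zero]
      exact mul_nonneg hK0 (by linarith)
  have hbound_int : MeasureTheory.Integrable (fun _ : ℝ => K * (-c)) μ := by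
    rw [hμdef]
    refine MeasureTheory.integrableOn_const ?_
    rw [Real.volume_Ioc]
    exact ENNReal.ofReal_ne_top
  have hlimF : ∀ᵐ u ∂μ, Tendsto (fun x => Fn x u) atTop (nhds (hfun u)) := by
    rw [hμdef, MeasureTheory.ae_restrict_iff' measurableSet_Ioc]
    apply MeasureTheory.ae_of_all
    intro u hu
    have hevlt : ∀ᶠ x in atTop, B x < u := hBlim.eventually_lt_const hu.1
    have hFc : ContinuousAt F c :=
      hFcont.continuousAt (hIoo_open.mem_nhds (hIccsub ⟨le_rfl, hc.le⟩))
    have hFB : Tendsto (fun x => F (B x)) atTop (nhds (F c)) :=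
      hFc.tendsto.comp hBlim
    have hval : Tendsto (fun x => (F u - F (B x)) / (R u - 1)) atTop
        (nhds ((F u - F c) / (R u - 1))) :=
      (tendsto_const_nhds.sub hFB).div_const _
    apply hval.congr'
    filter_upwards [hevlt] with x hxlt
    simp only [hFndef]
    rw [Set.indicator_of_mem (Set.mem_Ioc.mpr ⟨hxlt, hu.2⟩)]
  have hDCT := MeasureTheory.tendsto_integral_filter_of_dominated_convergence
    (μ := μ) (bound := fun _ => K * (-c)) hmeasF hboundF hbound_int hlimF
  have hint_eq : ∀ x ≥ (0:ℝ), (∫ u, Fn x u ∂μ) =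
      ∫ u in (B x)..(0:ℝ), (F u - F (B x)) / (R u - 1) := by
    intro x hx
    have hsub : Set.Ioc (B x) 0 ⊆ Set.Ioc c 0 :=
      Set.Ioc_subset_Ioc (hBrange x hx).1.le le_rfl
    simp only [hμdef, hFndef]
    rw [MeasureTheory.integral_indicator measurableSet_Ioc,
      MeasureTheory.Measure.restrict_restrict measurableSet_Ioc,
      Set.inter_eq_self_of_subset_left hsub,
      intervalIntegral.integral_of_le (hBrange x hx).2]
  have htarget : (∫ u, hfun u ∂μ) = ∫ u in c..(0:ℝ), (F u - F c) / (R u - 1) := by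
    simp only [hμdef, hhdef]
    rw [intervalIntegral.integral_of_le hc.le]
  rw [← htarget]
  apply hDCT.neg.congr'
  filter_upwards [eventually_ge_atTop (0:ℝ)] with x hx
  rw [part1 x hx, hint_eq x hx]
end

section
/- Define L₂(x) = B(x) − x·(R(B(x)) − 1) for x ≥ 0. Then lim_{x→∞} L₂(x) = c. -/
open Filter Set

/-- With `L₂ x = B x − x·(R(B x) − 1)`, one has `lim_{x→∞} L₂ x = c`. -/
theorem L2_limit
    (c : ℝ) (hc : c < 0)
    (R : ℝ → ℝ) (ε : ℝ) (hε : 0 < ε)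
    (hRconv : ConvexOn ℝ (Set.Ioo (c - ε) ε) R)
    (hRC1 : ContDiffOn ℝ 1 R (Set.Ioo (c - ε) ε))
    (hR0 : R 0 = 0) (hRc : R c = 1)
    (hRlt1 : ∀ u ∈ Set.Ioc c 0, R u < 1)
    (hR'c : deriv R c < 0)
    (B : ℝ → ℝ) (hB0 : B 0 = 0)
    (hBode : ∀ x ≥ (0:ℝ), HasDerivAt B (R (B x) - 1) x)
    (hBanti : StrictAntiOn B (Set.Ici 0))
    (hBrange : ∀ x ≥ (0:ℝ), B x ∈ Set.Ioc c 0)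
    (hBlim : Tendsto B atTop (nhds c))
    (L₂ : ℝ → ℝ) (hL₂ : ∀ x ≥ (0:ℝ), L₂ x = B x - x * (R (B x) - 1)) :
    Tendsto L₂ atTop (nhds c) := by
  set d : ℝ := c / 2 with hd
  have hdc : c < d := by rw [hd]; linarith
  have hd0 : d < 0 := by rw [hd]; linarith
  have hRd : R d < 1 := hRlt1 d ⟨hdc, hd0.le⟩
  set a : ℝ := (1 - R d) / (d - c) with ha
  have hapos : 0 < a := div_pos (by linarith) (by linarith)
  -- chord bound: R u - 1 ≤ -a (u - c) for u ∈ (c, d]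
  have hslope : ∀ u, c < u → u ≤ d → R u - 1 ≤ -a * (u - c) := by
    intro u hu1 hu2
    have hcm : c ∈ Ioo (c - ε) ε := ⟨by linarith, by linarith⟩
    have hdm : d ∈ Ioo (c - ε) ε := ⟨by linarith, by linarith⟩
    have hdcpos : (0:ℝ) < d - c := by linarith
    have ht : 0 ≤ (d - u)/(d - c) := div_nonneg (by linarith) (by linarith)
    have hs : 0 ≤ (u - c)/(d - c) := div_nonneg (by linarith) (by linarith)
    have hts : (d - u)/(d - c) + (u - c)/(d - c) = 1 := by field_simp; ring
    have hne : d - c ≠ 0 := ne_of_gt hdcpos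
    have hcv := hRconv.2 hcm hdm ht hs hts
    simp only [smul_eq_mul] at hcv
    have hcomb : (d - u)/(d - c) * c + (u - c)/(d - c) * d = u := by
      rw [div_mul_eq_mul_div, div_mul_eq_mul_div, ← add_div, div_eq_iff hne]; ring
    rw [hcomb, hRc] at hcv
    have haeq : a * (u - c) = ((u - c)/(d - c)) * (1 - R d) := by
      rw [ha]; ring
    have hRdle : ((u - c)/(d - c)) * R d ≤ ((u - c)/(d - c)) * R d := le_refl _
    nlinarith [hcv, hts]
  -- Lipschitz constant C for R on [c, 0]
  have hsopen : IsOpen (Ioo (c - ε) ε) := isOpen_Ioo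
  have hIccsub : Icc c 0 ⊆ Ioo (c - ε) ε := fun u hu =>
    ⟨by linarith [hu.1], lt_of_le_of_lt hu.2 hε⟩
  have hdiffR : ∀ u ∈ Icc c 0, DifferentiableAt ℝ R u := fun u hu =>
    (hRC1.differentiableOn one_ne_zero).differentiableAt (hsopen.mem_nhds (hIccsub hu))
  have hderivCont : ContinuousOn (deriv R) (Ioo (c - ε) ε) :=
    hRC1.continuousOn_deriv_of_isOpen hsopen le_rfl
  obtain ⟨u₀, hu₀, hu₀max'⟩ :=
    isCompact_Icc.exists_isMaxOn (nonempty_Icc.2 hc.le)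
      ((continuous_abs.comp_continuousOn (hderivCont.mono hIccsub)))
  have hu₀max : ∀ v ∈ Icc c 0, |deriv R v| ≤ |deriv R u₀| := fun v hv => hu₀max' hv
  set C : ℝ := |deriv R u₀| with hC
  have hCnn : 0 ≤ C := abs_nonneg _
  have hlip : ∀ u ∈ Icc c 0, |R u - 1| ≤ C * (u - c) := by
    intro u hu
    have := (convex_Icc c 0).norm_image_sub_le_of_norm_deriv_le hdiffR
      (fun v hv => hu₀max v hv) (left_mem_Icc.2 hc.le) hu
    rw [Real.norm_eq_abs, Real.norm_eq_abs, hRc] at this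
    rwa [abs_of_nonneg (by linarith [hu.1] : (0:ℝ) ≤ u - c)] at this
  -- choose x₀ with B x < d for x ≥ x₀
  obtain ⟨x₀, hx₀⟩ := eventually_atTop.mp
    ((hBlim.eventually (gt_mem_nhds hdc)).and (eventually_ge_atTop 0))
  have hx₀0 : (0:ℝ) ≤ x₀ := (hx₀ x₀ le_rfl).2
  -- h = exp(a x) (B x - c) is antitone on [x₀, ∞)
  set h : ℝ → ℝ := fun x => Real.exp (a * x) * (B x - c) with hh
  have hderivh : ∀ x ≥ (0:ℝ), HasDerivAt h
      (Real.exp (a * x) * a * (B x - c) + Real.exp (a * x) * (R (B x) - 1)) x := by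
    intro x hx
    have e1 : HasDerivAt (fun y : ℝ => a * y) a x := by
      simpa using (hasDerivAt_id x).const_mul a
    have e2 : HasDerivAt (fun y : ℝ => Real.exp (a * y)) (Real.exp (a * x) * a) x := by
      exact (Real.hasDerivAt_exp (a * x)).comp x e1
    exact (e2.mul ((hBode x hx).sub_const c)).congr_deriv (by ring)
  have hBcont : ContinuousOn B (Ici x₀) := fun x hx =>
    ((hBode x (le_trans hx₀0 hx)).continuousAt).continuousWithinAt
  have hanti : AntitoneOn h (Ici x₀) := by
    apply antitoneOn_of_deriv_nonpos (convex_Ici x₀)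
    · exact ((Real.continuous_exp.comp (continuous_const.mul continuous_id)).continuousOn).mul
        (hBcont.sub continuousOn_const)
    · intro x hx
      rw [interior_Ici] at hx
      exact ((hderivh x (le_of_lt (lt_of_le_of_lt hx₀0 hx))).differentiableAt).differentiableWithinAt
    · intro x hx
      rw [interior_Ici] at hx
      have hx0 : (0:ℝ) ≤ x := le_of_lt (lt_of_le_of_lt hx₀0 hx)
      rw [(hderivh x hx0).deriv]
      have hBx := hBrange x hx0
      have hBxd : B x < d := (hx₀ x hx.le).1
      have hs := hslope (B x) hBx.1 hBxd.le
      have hexp : 0 < Real.exp (a * x) := Real.exp_pos _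
      nlinarith [hs, hexp, hBx.1]
  set K : ℝ := Real.exp (a * x₀) * (B x₀ - c) with hK
  have hKpos : 0 < K := mul_pos (Real.exp_pos _) (by linarith [(hBrange x₀ hx₀0).1])
  have hexpbd : ∀ x ≥ x₀, B x - c ≤ K * Real.exp (-(a * x)) := by
    intro x hx
    have := hanti (self_mem_Ici) hx hx
    rw [hh] at this
    have hE : 0 < Real.exp (a * x) := Real.exp_pos _
    rw [Real.exp_neg]
    rw [ge_iff_le, ← sub_nonneg] at hx
    calc B x - c = (Real.exp (a * x) * (B x - c)) * (Real.exp (a * x))⁻¹ := by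
          field_simp
      _ ≤ K * (Real.exp (a * x))⁻¹ := by
          apply mul_le_mul_of_nonneg_right _ (inv_nonneg.2 hE.le)
          exact this
  -- x * (R (B x) - 1) → 0
  have hg0 : Tendsto (fun x => x * (R (B x) - 1)) atTop (nhds 0) := by
    have hbound : Tendsto (fun x => (C * K) * (x * Real.exp (-(a * x)))) atTop (nhds 0) := by
      have h1 : Tendsto (fun x => x * Real.exp (-(a * x))) atTop (nhds 0) := by
        have h2 : Tendsto (fun y : ℝ => (1/a) * (y * Real.exp (-y))) atTop (nhds 0) := by
          have := (Real.tendsto_pow_mul_exp_neg_atTop_nhds_zero 1).const_mul (1/a)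
          simpa using this
        have h3 : Tendsto (fun x : ℝ => a * x) atTop atTop :=
          tendsto_atTop_atTop_of_monotone' (fun u v huv => by nlinarith)
            (by
              rintro ⟨b, hb⟩
              have := hb (mem_range_self ((b+1)/a))
              have : a * ((b+1)/a) = b + 1 := by field_simp
              simp only [mem_upperBounds, Set.mem_range] at hb
              have h4 := hb (a * ((b+1)/a)) ⟨(b+1)/a, rfl⟩
              rw [this] at h4
              linarith)
        have := h2.comp h3
        apply this.congr
        intro x
        simp only [Function.comp_apply]
        field_simp
      simpa using h1.const_mul (C * K)
    apply squeeze_zero_norm' _ hbound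
    filter_upwards [eventually_ge_atTop x₀, eventually_ge_atTop (0:ℝ)] with x hx hx0
    have hBx := hBrange x hx0
    have hl := hlip (B x) ⟨hBx.1.le, hBx.2⟩
    have he := hexpbd x hx
    have hen : 0 ≤ Real.exp (-(a * x)) := (Real.exp_pos _).le
    rw [Real.norm_eq_abs, abs_mul, abs_of_nonneg hx0]
    calc x * |R (B x) - 1| ≤ x * (C * (B x - c)) := by
          apply mul_le_mul_of_nonneg_left hl hx0
      _ ≤ x * (C * (K * Real.exp (-(a * x)))) := by
          apply mul_le_mul_of_nonneg_left _ hx0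
          exact mul_le_mul_of_nonneg_left he hCnn
      _ = C * K * (x * Real.exp (-(a * x))) := by ring
  -- conclude
  have hfinal : Tendsto (fun x => B x - x * (R (B x) - 1)) atTop (nhds c) := by
    have := hBlim.sub hg0
    simpa using this
  apply hfinal.congr'
  filter_upwards [eventually_ge_atTop (0:ℝ)] with x hx
  exact (hL₂ x hx).symm
end

section
/- Define M(x) = (A(x) − x·F(B(x))) + r·(B(x) − x·(R(B(x)) − 1)) for x ≥ 0. Then M(x) converges as x → ∞ to −∫_c^0 (F(u) − F(c))/(R(u) − 1) du + r·c, and this limit is strictly negative if and only if r > (1/c)·∫_c^0 (F(u) − F(c))/(R(u) − 1) du. -/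
open Filter Set

/-- With `M x = (A x − x·F(B x)) + r·(B x − x·(R(B x) − 1))`, the function
`M` converges as `x → ∞` to `−∫_c^0 (F u − F c)/(R u − 1) du + r·c`, and this limit is
strictly negative iff `r > (1/c)·∫_c^0 (F u − F c)/(R u − 1) du`. -/
theorem M_limit_and_sign
(c : ℝ) (hc : c < 0)
    (F R : ℝ → ℝ) (ε : ℝ) (hε : 0 < ε)
    (hFconv : ConvexOn ℝ (Set.Ioo (c - ε) ε) F)
    (hRconv : ConvexOn ℝ (Set.Ioo (c - ε) ε) R)
    (hFC1 : ContDiffOn ℝ 1 F (Set.Ioo (c - ε) ε))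
    (hRC1 : ContDiffOn ℝ 1 R (Set.Ioo (c - ε) ε))
    (hF0 : F 0 = 0) (hR0 : R 0 = 0) (hRc : R c = 1)
    (hRlt1 : ∀ u ∈ Set.Ioc c 0, R u < 1)
    (hR'c : deriv R c < 0)
    (B : ℝ → ℝ) (hB0 : B 0 = 0)
    (hBode : ∀ x ≥ (0:ℝ), HasDerivAt B (R (B x) - 1) x)
    (hBanti : StrictAntiOn B (Set.Ici 0))
    (hBrange : ∀ x ≥ (0:ℝ), B x ∈ Set.Ioc c 0)
    (hBlim : Tendsto B atTop (nhds c))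
    (A : ℝ → ℝ) (hA : ∀ x, A x = ∫ s in (0:ℝ)..x, F (B s))
    (r : ℝ) (M : ℝ → ℝ)
    (hM : ∀ x ≥ (0:ℝ), M x = (A x - x * F (B x)) + r * (B x - x * (R (B x) - 1))) :
    Tendsto M atTop
      (nhds (-(∫ u in c..(0:ℝ), (F u - F c) / (R u - 1)) + r * c)) ∧
    (-(∫ u in c..(0:ℝ), (F u - F c) / (R u - 1)) + r * c < 0 ↔
      (1 / c) * (∫ u in c..(0:ℝ), (F u - F c) / (R u - 1)) < r) := by
  have hIoo : Set.Icc c 0 ⊆ Set.Ioo (c - ε) ε := fun u hu =>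
    ⟨by linarith [hu.1], by linarith [hu.2]⟩
  set q : ℝ → ℝ := fun u => (F u - F c) / (R u - 1) with hqdef
  set J : ℝ := ∫ u in c..(0:ℝ), q u with hJdef
  -- continuity facts
  have hFcont : ContinuousOn F (Set.Icc c 0) := (hFC1.continuousOn).mono hIoo
  have hRcont : ContinuousOn R (Set.Icc c 0) := (hRC1.continuousOn).mono hIoo
  have hIocIcc : Set.Ioc c 0 ⊆ Set.Icc c 0 := Set.Ioc_subset_Icc_self
  have hRne : ∀ u ∈ Set.Ioc c 0, R u - 1 ≠ 0 := fun u hu => by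
    have := hRlt1 u hu; linarith
  -- convexity upper bound : R u ≤ u / c on Icc c 0
  have hRub : ∀ u ∈ Set.Icc c 0, R u ≤ u / c := by
    intro u hu
    have hcm : c ∈ Set.Ioo (c - ε) ε := hIoo ⟨le_refl c, hc.le⟩
    have h0m : (0:ℝ) ∈ Set.Ioo (c - ε) ε := hIoo ⟨hc.le, le_refl 0⟩
    have ha : (0:ℝ) ≤ u / c := div_nonneg_of_nonpos hu.2 hc.le
    have hb : (0:ℝ) ≤ 1 - u / c := by
      have h1 : u / c ≤ 1 := by
        rw [div_le_iff_of_neg hc]; linarith [hu.1]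
      linarith
    have hsum : u / c + (1 - u / c) = 1 := by ring
    have hcomb := hRconv.2 hcm h0m ha hb hsum
    have hcu : (u / c) • c + (1 - u / c) • (0:ℝ) = u := by
      rw [smul_eq_mul, smul_eq_mul, mul_zero, add_zero, div_mul_cancel₀ u hc.ne]
    rw [hcu] at hcomb
    simpa [hRc, hR0] using hcomb
  -- Lipschitz bounds
  have hFderiv : ∀ u ∈ Set.Icc c 0, HasDerivWithinAt F (deriv F u) (Set.Icc c 0) u := by
    intro u hu
    have : DifferentiableAt ℝ F u :=
      (hFC1.differentiableOn one_ne_zero).differentiableAt (isOpen_Ioo.mem_nhds (hIoo hu))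
    exact this.hasDerivAt.hasDerivWithinAt
  have hRderiv : ∀ u ∈ Set.Icc c 0, HasDerivWithinAt R (deriv R u) (Set.Icc c 0) u := by
    intro u hu
    have : DifferentiableAt ℝ R u :=
      (hRC1.differentiableOn one_ne_zero).differentiableAt (isOpen_Ioo.mem_nhds (hIoo hu))
    exact this.hasDerivAt.hasDerivWithinAt
  have hFdc : ContinuousOn (deriv F) (Set.Icc c 0) :=
    (hFC1.continuousOn_deriv_of_isOpen isOpen_Ioo le_rfl).mono hIoo
  have hRdc : ContinuousOn (deriv R) (Set.Icc c 0) :=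
    (hRC1.continuousOn_deriv_of_isOpen isOpen_Ioo le_rfl).mono hIoo
  obtain ⟨LF, hLF⟩ := (isCompact_Icc (a := c) (b := 0)).exists_bound_of_continuousOn hFdc
  obtain ⟨LR, hLR⟩ := (isCompact_Icc (a := c) (b := 0)).exists_bound_of_continuousOn hRdc
  have hcmem : c ∈ Set.Icc c 0 := ⟨le_refl c, hc.le⟩
  have hLF0 : 0 ≤ LF := le_trans (norm_nonneg _) (hLF c hcmem)
  have hLR0 : 0 ≤ LR := le_trans (norm_nonneg _) (hLR c hcmem)
  have hFlip : ∀ u ∈ Set.Icc c 0, ∀ v ∈ Set.Icc c 0, |F u - F v| ≤ LF * |u - v| := by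
    intro u hu v hv
    simpa [Real.norm_eq_abs] using
      Convex.norm_image_sub_le_of_norm_hasDerivWithin_le hFderiv hLF (convex_Icc c 0) hv hu
  have hRlip : ∀ u ∈ Set.Icc c 0, ∀ v ∈ Set.Icc c 0, |R u - R v| ≤ LR * |u - v| := by
    intro u hu v hv
    simpa [Real.norm_eq_abs] using
      Convex.norm_image_sub_le_of_norm_hasDerivWithin_le hRderiv hLR (convex_Icc c 0) hv hu
  -- gap bound
  set lam : ℝ := (-c)⁻¹ with hlamdef
  have hlam : 0 < lam := inv_pos.2 (by linarith)
  have hlamc : (-c) * lam = 1 := mul_inv_cancel₀ (by linarith)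
  have hgap : ∀ u ∈ Set.Icc c 0, lam * (u - c) ≤ 1 - R u := by
    intro u hu
    have h1 := hRub u hu
    have h2 : 1 - u / c = lam * (u - c) := by
      have hmc : -c ≠ 0 := by intro h; apply hc.ne; linarith
      rw [hlamdef, inv_eq_one_div]
      field_simp
      rw [sub_div, div_self hc.ne]
      ring
    linarith
  -- exponential decay of B x - c
  have hg' : ∀ x ≥ (0:ℝ), HasDerivAt (fun y => (B y - c) * Real.exp (lam * y))
      ((R (B x) - 1) * Real.exp (lam * x) + (B x - c) * (Real.exp (lam * x) * lam)) x := by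
    intro x hx
    have h1 : HasDerivAt (fun y : ℝ => lam * y) lam x := by
      simpa using (hasDerivAt_id x).const_mul lam
    have h2 : HasDerivAt (fun y => Real.exp (lam * y)) (Real.exp (lam * x) * lam) x :=
      (Real.hasDerivAt_exp (lam * x)).comp x h1
    exact ((hBode x hx).sub_const c).mul h2
  have hganti : AntitoneOn (fun y => (B y - c) * Real.exp (lam * y)) (Set.Ici 0) := by
    apply antitoneOn_of_deriv_nonpos (convex_Ici 0)
    · intro x hx
      exact (hg' x hx).continuousAt.continuousWithinAt
    · intro x hx
      rw [interior_Ici] at hx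
      exact ((hg' x (le_of_lt hx)).differentiableAt).differentiableWithinAt
    · intro x hx
      rw [interior_Ici] at hx
      rw [(hg' x hx.le).deriv]
      have hb := hBrange x hx.le
      have hkey := hgap (B x) (hIocIcc hb)
      nlinarith [mul_le_mul_of_nonneg_right
        (show R (B x) - 1 + lam * (B x - c) ≤ 0 by linarith)
        (Real.exp_pos (lam * x)).le]
  have hdecay : ∀ x ≥ (0:ℝ), B x - c ≤ (-c) * Real.exp (-(lam * x)) := by
    intro x hx
    have h0 := hganti Set.self_mem_Ici (Set.mem_Ici.2 hx) hx
    simp only [hB0, zero_sub, mul_zero, Real.exp_zero, mul_one] at h0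
    have hexp := Real.exp_pos (lam * x)
    rw [Real.exp_neg, ← div_eq_mul_inv]
    exact (le_div_iff₀ hexp).2 h0
  -- x * exp(-lam x) → 0
  have T0 : Tendsto (fun x => x * Real.exp (-(lam * x))) atTop (nhds 0) := by
    have h1 : Tendsto (fun x : ℝ => lam * x) atTop atTop :=
      Tendsto.const_mul_atTop hlam tendsto_id
    have h2 := (Real.tendsto_pow_mul_exp_neg_atTop_nhds_zero 1).comp h1
    have h3 := h2.const_mul lam⁻¹
    rw [mul_zero] at h3
    refine h3.congr fun x => ?_
    have hne : lam ≠ 0 := ne_of_gt hlam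
    simp only [Function.comp_apply, pow_one]
    field_simp
  -- φ, ψ and their continuity
  set φ : ℝ → ℝ := fun u => F u / (R u - 1) with hφdef
  set ψ : ℝ → ℝ := fun u => (R u - 1)⁻¹ with hψdef
  have hφcont : ContinuousOn φ (Set.Ioc c 0) :=
    (hFcont.mono hIocIcc).div ((hRcont.mono hIocIcc).sub continuousOn_const) hRne
  have hψcont : ContinuousOn ψ (Set.Ioc c 0) :=
    ((hRcont.mono hIocIcc).sub continuousOn_const).inv₀ hRne
  have hqcont : ContinuousOn q (Set.Ioc c 0) :=
    ((hFcont.mono hIocIcc).sub continuousOn_const).div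
      ((hRcont.mono hIocIcc).sub continuousOn_const) hRne
  -- change of variables
  have hBmem : ∀ x ≥ (0:ℝ), ∀ s ∈ Set.uIcc (0:ℝ) x, B s ∈ Set.Ioc c 0 := by
    intro x hx s hs
    rw [Set.uIcc_of_le hx] at hs
    exact hBrange s hs.1
  have hBder : ∀ x ≥ (0:ℝ), ∀ s ∈ Set.uIcc (0:ℝ) x, HasDerivAt B (R (B s) - 1) s := by
    intro x hx s hs
    rw [Set.uIcc_of_le hx] at hs
    exact hBode s hs.1
  have hRBcont : ∀ x ≥ (0:ℝ), ContinuousOn (fun s => R (B s) - 1) (Set.uIcc (0:ℝ) x) := by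
    intro x hx
    have hBc : ContinuousOn B (Set.uIcc (0:ℝ) x) := fun s hs =>
      (hBder x hx s hs).continuousAt.continuousWithinAt
    exact ((hRcont.mono hIocIcc).comp hBc (fun s hs => hBmem x hx s hs)).sub continuousOn_const
  have himg : ∀ x ≥ (0:ℝ), B '' (Set.uIcc (0:ℝ) x) ⊆ Set.Ioc c 0 := by
    rintro x hx u ⟨s, hs, rfl⟩
    exact hBmem x hx s hs
  have hAx : ∀ x ≥ (0:ℝ), A x = ∫ u in (0:ℝ)..(B x), φ u := by
    intro x hx
    rw [hA x]
    have h1 : (∫ s in (0:ℝ)..x, F (B s)) = ∫ s in (0:ℝ)..x, (φ ∘ B) s * (R (B s) - 1) := by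
      apply intervalIntegral.integral_congr
      intro s hs
      have hmem := hBmem x hx s hs
      simp only [Function.comp_apply, hφdef]
      rw [div_mul_cancel₀ _ (hRne _ hmem)]
    rw [h1, intervalIntegral.integral_comp_mul_deriv' (hBder x hx) (hRBcont x hx)
      (hφcont.mono (himg x hx)), hB0]
  have hXx : ∀ x ≥ (0:ℝ), x = ∫ u in (0:ℝ)..(B x), ψ u := by
    intro x hx
    have h1 : (∫ s in (0:ℝ)..x, (ψ ∘ B) s * (R (B s) - 1)) = ∫ u in (0:ℝ)..(B x), ψ u := by
      rw [intervalIntegral.integral_comp_mul_deriv' (hBder x hx) (hRBcont x hx)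
        (hψcont.mono (himg x hx)), hB0]
    rw [← h1]
    have h2 : (∫ s in (0:ℝ)..x, (ψ ∘ B) s * (R (B s) - 1)) = ∫ s in (0:ℝ)..x, (1:ℝ) := by
      apply intervalIntegral.integral_congr
      intro s hs
      simp only [Function.comp_apply, hψdef]
      rw [inv_mul_cancel₀ (hRne _ (hBmem x hx s hs))]
    rw [h2]
    simp
  -- bound on q
  have hqb : ∀ u ∈ Set.Ioc c 0, ‖q u‖ ≤ LF * (-c) := by
    intro u hu
    have h1 : |F u - F c| ≤ LF * (u - c) := by
      have h := hFlip u (hIocIcc hu) c hcmem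
      rwa [abs_of_nonneg (by linarith [hu.1] : (0:ℝ) ≤ u - c)] at h
    have h2 : lam * (u - c) ≤ 1 - R u := hgap u (hIocIcc hu)
    have hpos : 0 < lam * (u - c) := mul_pos hlam (by linarith [hu.1])
    have h3 : 0 < 1 - R u := lt_of_lt_of_le hpos h2
    have h4 : u - c ≤ (-c) * (1 - R u) := by
      nlinarith [mul_le_mul_of_nonneg_left h2 (show (0:ℝ) ≤ -c by linarith)]
    rw [Real.norm_eq_abs, hqdef]
    simp only []
    rw [abs_div, abs_of_neg (show R u - 1 < 0 by linarith), neg_sub, div_le_iff₀ h3]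
    nlinarith [mul_le_mul_of_nonneg_left h4 hLF0]
  -- interval integrability of q on [c,0]
  have hqint : IntervalIntegrable q MeasureTheory.volume c 0 := by
    rw [intervalIntegrable_iff_integrableOn_Ioc_of_le hc.le]
    have hmeas : MeasureTheory.AEStronglyMeasurable q
        (MeasureTheory.volume.restrict (Set.Ioc c 0)) :=
      hqcont.aestronglyMeasurable measurableSet_Ioc
    refine MeasureTheory.Integrable.mono' (g := fun _ => LF * (-c))
      (MeasureTheory.integrableOn_const measure_Ioc_lt_top.ne enorm_ne_top) hmeas ?_
    exact (MeasureTheory.ae_restrict_iff' measurableSet_Ioc).2 (Filter.Eventually.of_forall hqb)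
  -- decomposition identity
  have hMdecomp : ∀ x ≥ (0:ℝ), M x = (-J + r * c) + ((∫ u in c..(B x), q u)
      + (F c - F (B x)) * x + (r * (B x - c) + (-r) * (x * (R (B x) - 1)))) := by
    intro x hx
    have hb := hBrange x hx
    have hsub0b : Set.uIcc (0:ℝ) (B x) ⊆ Set.Ioc c 0 := by
      rw [Set.uIcc_of_ge hb.2]
      intro u hu
      exact ⟨lt_of_lt_of_le hb.1 hu.1, hu.2⟩
    have hφint : IntervalIntegrable φ MeasureTheory.volume 0 (B x) :=
      (hφcont.mono hsub0b).intervalIntegrable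
    have hψint : IntervalIntegrable ψ MeasureTheory.volume 0 (B x) :=
      (hψcont.mono hsub0b).intervalIntegrable
    have hqint0b : IntervalIntegrable q MeasureTheory.volume 0 (B x) :=
      (hqcont.mono hsub0b).intervalIntegrable
    have hqintcb : IntervalIntegrable q MeasureTheory.volume c (B x) :=
      hqint.mono_set (Set.uIcc_subset_uIcc Set.left_mem_uIcc
        (by rw [Set.uIcc_of_le hc.le]; exact hIocIcc hb))
    have e1 : A x - x * F (B x) = (∫ u in (0:ℝ)..(B x), q u) + (F c - F (B x)) * x := by
      rw [hAx x hx]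
      have hx' : x * F (B x) = ∫ u in (0:ℝ)..(B x), F (B x) * ψ u := by
        rw [intervalIntegral.integral_const_mul, ← hXx x hx]
        ring
      rw [hx', ← intervalIntegral.integral_sub hφint (hψint.const_mul _)]
      have heq : Set.EqOn (fun u => φ u - F (B x) * ψ u)
          (fun u => q u + (F c - F (B x)) * ψ u) (Set.uIcc (0:ℝ) (B x)) := by
        intro u hu
        have hne := hRne u (hsub0b hu)
        simp only [hφdef, hψdef, hqdef]
        field_simp
        ring
      rw [intervalIntegral.integral_congr heq]
      rw [intervalIntegral.integral_add hqint0b (hψint.const_mul _)]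
      rw [intervalIntegral.integral_const_mul]
      rw [← hXx x hx]
    have e2 : (∫ u in (0:ℝ)..(B x), q u) = -J + ∫ u in c..(B x), q u := by
      have hadd := intervalIntegral.integral_add_adjacent_intervals hqint.symm hqintcb
      rw [← hadd]
      have h0c : (∫ u in (0:ℝ)..c, q u) = -J := by
        rw [hJdef, intervalIntegral.integral_symm]
      rw [h0c]
    rw [hM x hx, e1, e2]
    ring
  -- tendsto of the pieces
  have hBtend : Tendsto (fun x => B x - c) atTop (nhds 0) := by
    simpa using hBlim.sub_const c
  have tq : Tendsto (fun x => ∫ u in c..(B x), q u) atTop (nhds 0) := by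
    apply squeeze_zero_norm' (a := fun x => (LF * (-c)) * (B x - c))
    · filter_upwards [eventually_ge_atTop (0:ℝ)] with x hx
      have hb := hBrange x hx
      have h1 : ‖∫ u in c..(B x), q u‖ ≤ (LF * (-c)) * |B x - c| := by
        apply intervalIntegral.norm_integral_le_of_norm_le_const
        intro u hu
        rw [Set.uIoc_of_le hb.1.le] at hu
        exact hqb u ⟨hu.1, le_trans hu.2 hb.2⟩
      rwa [abs_of_nonneg (by linarith [hb.1] : (0:ℝ) ≤ B x - c)] at h1
    · simpa using hBtend.const_mul (LF * (-c))
  have t2 : Tendsto (fun x => (F c - F (B x)) * x) atTop (nhds 0) := by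
    apply squeeze_zero_norm' (a := fun x => (LF * (-c)) * (x * Real.exp (-(lam * x))))
    · filter_upwards [eventually_ge_atTop (0:ℝ)] with x hx
      have hb := hBrange x hx
      have h1 : |F c - F (B x)| ≤ LF * (B x - c) := by
        have h := hFlip c hcmem (B x) (hIocIcc hb)
        rwa [abs_of_nonpos (by linarith [hb.1] : c - B x ≤ 0), neg_sub] at h
      have h2 := hdecay x hx
      rw [Real.norm_eq_abs, abs_mul, abs_of_nonneg hx]
      calc |F c - F (B x)| * x ≤ (LF * (B x - c)) * x :=
            mul_le_mul_of_nonneg_right h1 hx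
        _ ≤ (LF * ((-c) * Real.exp (-(lam * x)))) * x :=
            mul_le_mul_of_nonneg_right (mul_le_mul_of_nonneg_left h2 hLF0) hx
        _ = (LF * (-c)) * (x * Real.exp (-(lam * x))) := by ring
    · simpa using T0.const_mul (LF * (-c))
  have t3 : Tendsto (fun x => r * (B x - c)) atTop (nhds 0) := by
    simpa using hBtend.const_mul r
  have t4 : Tendsto (fun x => (-r) * (x * (R (B x) - 1))) atTop (nhds 0) := by
    apply squeeze_zero_norm' (a := fun x => (|r| * (LR * (-c))) * (x * Real.exp (-(lam * x))))
    · filter_upwards [eventually_ge_atTop (0:ℝ)] with x hx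
      have hb := hBrange x hx
      have h1 : |R (B x) - 1| ≤ LR * (B x - c) := by
        have h := hRlip (B x) (hIocIcc hb) c hcmem
        rw [hRc, abs_of_nonneg (by linarith [hb.1] : (0:ℝ) ≤ B x - c)] at h
        exact h
      have h2 := hdecay x hx
      have s1 : x * |R (B x) - 1| ≤ x * (LR * (B x - c)) := mul_le_mul_of_nonneg_left h1 hx
      have s2 : LR * (B x - c) ≤ LR * ((-c) * Real.exp (-(lam * x))) :=
        mul_le_mul_of_nonneg_left h2 hLR0
      have s3 : x * (LR * (B x - c)) ≤ x * (LR * ((-c) * Real.exp (-(lam * x)))) :=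
        mul_le_mul_of_nonneg_left s2 hx
      rw [Real.norm_eq_abs, abs_mul, abs_mul, abs_neg, abs_of_nonneg hx]
      have s4 : |r| * (x * |R (B x) - 1|) ≤ |r| * (x * (LR * ((-c) * Real.exp (-(lam * x))))) :=
        mul_le_mul_of_nonneg_left (le_trans s1 s3) (abs_nonneg r)
      calc |r| * (x * |R (B x) - 1|) ≤ |r| * (x * (LR * ((-c) * Real.exp (-(lam * x))))) := s4
        _ = (|r| * (LR * (-c))) * (x * Real.exp (-(lam * x))) := by ring
    · simpa using T0.const_mul (|r| * (LR * (-c)))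
  -- assemble
  have hsumt : Tendsto (fun x => (-J + r * c) + ((∫ u in c..(B x), q u)
      + (F c - F (B x)) * x + (r * (B x - c) + (-r) * (x * (R (B x) - 1))))) atTop
      (nhds (-J + r * c)) := by
    have h := tendsto_const_nhds (x := -J + r * c) (f := atTop (α := ℝ)) |>.add
      ((tq.add t2).add (t3.add t4))
    simpa using h
  have hMt : Tendsto M atTop (nhds (-J + r * c)) :=
    hsumt.congr' ((eventually_ge_atTop (0:ℝ)).mono fun x hx => (hMdecomp x hx).symm)
  refine ⟨hMt, ?_⟩
  have hJc : (1 / c) * J = J / c := by rw [one_div, inv_mul_eq_div]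
  constructor
  · intro h
    rw [hJc, div_lt_iff_of_neg hc]
    linarith
  · intro h
    rw [hJc, div_lt_iff_of_neg hc] at h
    linarith
end

section
/- In the Vasicek model, the yield-curve threshold equals θ − 3σ²/(4λ²): with F(u) = λθu + (σ²/2)u², R(u) = −λu and c = −1/λ (so that R(c) = 1), one has (1/c)·∫_c^0 (F(u) − F(c))/(R(u) − 1) du = θ − 3σ²/(4λ²). -/
open Set

/-- In the Vasicek model, with `F u = λθu + (σ²/2)u²`, `R u = −λu` and
`c = −1/λ` (so that `R c = 1`), the yield-curve threshold is
`(1/c)·∫_c^0 (F u − F c)/(R u − 1) du = θ − 3σ²/(4λ²)`. -/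
theorem vasicek_y_norm
    (lam th sig : ℝ) (hlam : 0 < lam) (hth : 0 < th) (hsig : 0 < sig)
    (F R : ℝ → ℝ)
    (hF : ∀ u, F u = lam * th * u + sig ^ 2 / 2 * u ^ 2)
    (hR : ∀ u, R u = -lam * u)
    (c : ℝ) (hc : c = -1 / lam) :
    (1 / c) * (∫ u in c..(0:ℝ), (F u - F c) / (R u - 1)) =
      th - 3 * sig ^ 2 / (4 * lam ^ 2) := by
  have hlam' : lam ≠ 0 := ne_of_gt hlam
  have hcneg : c < 0 := by
    rw [hc]; exact div_neg_of_neg_of_pos (by norm_num) hlam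
  have key : (∫ u in c..(0:ℝ), (F u - F c) / (R u - 1))
      = ∫ u in c..(0:ℝ), ((-th + sig ^ 2 / (2 * lam ^ 2)) + (-(sig ^ 2) / (2 * lam)) * u) := by
    apply intervalIntegral.integral_congr_ae
    filter_upwards with u hu
    rw [Set.uIoc_of_le (le_of_lt hcneg)] at hu
    have hcu : c < u := hu.1
    have hpos : 0 < lam * u + 1 := by
      have : lam * c + 1 = 0 := by rw [hc]; field_simp; norm_num
      nlinarith [mul_lt_mul_of_pos_left hcu hlam]
    have hne' : -lam * u - 1 ≠ 0 := by nlinarith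
    rw [hF, hF, hR, hc, div_eq_iff hne']
    field_simp
    ring
  rw [key]
  rw [intervalIntegral.integral_add (by apply Continuous.intervalIntegrable; continuity) (by apply Continuous.intervalIntegrable; continuity)]
  rw [intervalIntegral.integral_const, intervalIntegral.integral_const_mul,
    integral_id]
  rw [hc, smul_eq_mul]
  field_simp
  ring
end

section
/- In the Cox–Ingersoll–Ross model, the yield-curve threshold equals (2aθ/(γ − a))·log(2γ/(a + γ)): with F(u) = aθu, R(u) = (σ²/2)u² − au, γ = √(2σ² + a²) and c = −2/(a + γ) (so that R(c) = 1), one has (1/c)·∫_c^0 (F(u) − F(c))/(R(u) − 1) du = (2aθ/(γ − a))·log(2γ/(a + γ)). -/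
open Set
open intervalIntegral

/-- In the Cox–Ingersoll–Ross model, with `F u = aθu`,
`R u = (σ²/2)u² − au`, `γ = √(2σ² + a²)` and `c = −2/(a + γ)` (so that `R c = 1`),
the yield-curve threshold is
`(1/c)·∫_c^0 (F u − F c)/(R u − 1) du = (2aθ/(γ − a))·log(2γ/(a + γ))`. -/
theorem cir_y_norm
    (a th sig : ℝ) (ha : 0 < a) (hth : 0 < th) (hsig : 0 < sig)
    (γ : ℝ) (hγ : γ = Real.sqrt (2 * sig ^ 2 + a ^ 2))
    (F R : ℝ → ℝ)
    (hF : ∀ u, F u = a * th * u)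
    (hR : ∀ u, R u = sig ^ 2 / 2 * u ^ 2 - a * u)
    (c : ℝ) (hc : c = -2 / (a + γ)) :
    (1 / c) * (∫ u in c..(0:ℝ), (F u - F c) / (R u - 1)) =
      2 * a * th / (γ - a) * Real.log (2 * γ / (a + γ)) := by
  have hγ0 : 0 ≤ γ := hγ ▸ Real.sqrt_nonneg _
  have hγ2 : γ ^ 2 = 2 * sig ^ 2 + a ^ 2 := by
    rw [hγ]; exact Real.sq_sqrt (by positivity)
  have hγa : a < γ := by nlinarith [sq_nonneg (γ - a), sq_nonneg (γ + a)]
  have hγa' : 0 < γ - a := sub_pos.2 hγa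
  have hγpos : 0 < γ := lt_trans ha hγa
  have hac : 0 < a + γ := by linarith
  have hc0 : c < 0 := by
    rw [hc]; exact div_neg_of_neg_of_pos (by norm_num) hac
  set c' : ℝ := 2 / (γ - a) with hc'
  have hc'0 : 0 < c' := by positivity
  have hfac : ∀ u, R u - 1 = sig ^ 2 / 2 * ((u - c) * (u - c')) := by
    intro u
    rw [hR, hc, hc']
    have h1 : a + γ ≠ 0 := ne_of_gt hac
    have h2 : γ - a ≠ 0 := ne_of_gt hγa'
    field_simp
    linear_combination (-2*u*a - 2) * hγ2
  have key : ∀ u, u ≠ c → u ≠ c' →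
      (F u - F c) / (R u - 1) = (2 * a * th / sig ^ 2) * (u - c')⁻¹ := by
    intro u hu hu'
    rw [hF, hF, hfac]
    have h1 : u - c ≠ 0 := sub_ne_zero.2 hu
    have h2 : u - c' ≠ 0 := sub_ne_zero.2 hu'
    field_simp
  have hcongr : (∫ u in c..(0:ℝ), (F u - F c) / (R u - 1)) =
      ∫ u in c..(0:ℝ), (2 * a * th / sig ^ 2) * (u - c')⁻¹ := by
    apply intervalIntegral.integral_congr_ae
    have hae : ∀ᵐ x : ℝ, x ≠ c := by
      rw [MeasureTheory.ae_iff]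
      simp [Real.volume_singleton]
    filter_upwards [hae] with x hx hmem
    have hx' : x ≠ c' := by
      rw [Set.uIoc_of_le hc0.le] at hmem
      exact ne_of_lt (lt_of_le_of_lt hmem.2 hc'0)
    exact key x hx hx'
  have hI : (∫ u in c..(0:ℝ), (u - c')⁻¹) = Real.log ((0 - c') / (c - c')) := by
    have := intervalIntegral.integral_comp_sub_right (fun x : ℝ => x⁻¹) c' (a := c) (b := 0)
    rw [this]
    apply integral_inv
    intro hmem
    rw [Set.mem_uIcc] at hmem
    rcases hmem with h | h
    · linarith [h.2]
    · linarith [h.1, hc'0, hc0]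
  rw [hcongr, intervalIntegral.integral_const_mul, hI]
  have hne1 : a + γ ≠ 0 := ne_of_gt hac
  have hne2 : γ - a ≠ 0 := ne_of_gt hγa'
  have harg : (0 - c') / (c - c') = (2 * γ / (a + γ))⁻¹ := by
    have e1 : c - c' = -(4 * γ) / ((a + γ) * (γ - a)) := by
      rw [hc, hc']; field_simp; ring
    have e0 : (0:ℝ) - c' = -(2 / (γ - a)) := by rw [hc']; ring
    rw [e1, e0]
    field_simp
    ring
  rw [harg, Real.log_inv, hc]
  have hs : sig ^ 2 = (γ ^ 2 - a ^ 2) / 2 := by linarith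
  rw [hs]
  set L := Real.log (2 * γ / (a + γ))
  have h3 : -(a ^ 2 * 2) + γ ^ 2 * 2 ≠ 0 := by nlinarith
  have h4 : (-(a ^ 2 * 2) + γ ^ 2 * 2)⁻¹ * (-(a ^ 2 * 2) + γ ^ 2 * 2) = 1 :=
    inv_mul_cancel₀ h3
  have h5 : (-a ^ 2 + γ ^ 2)⁻¹ * (-a ^ 2 + γ ^ 2) = 1 :=
    inv_mul_cancel₀ (by nlinarith)
  field_simp
  linear_combination L * h5
end

section
/- In the gamma model, the yield-curve threshold equals (kλ/(1 + θ/λ))·log(1 + θ/λ): with F(u) = λθku/(1 − θu), R(u) = −λu and c = −1/λ (so that R(c) = 1), one has (1/c)·∫_c^0 (F(u) − F(c))/(R(u) − 1) du = (kλ/(1 + θ/λ))·log(1 + θ/λ). -/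
open Set

/-- In the gamma model, with `F u = λθku/(1 − θu)`, `R u = −λu` and
`c = −1/λ` (so that `R c = 1`), the yield-curve threshold is
`(1/c)·∫_c^0 (F u − F c)/(R u − 1) du = (kλ/(1 + θ/λ))·log(1 + θ/λ)`. -/
theorem gamma_model_y_norm
    (lam th k : ℝ) (hlam : 0 < lam) (hth : 0 < th) (hk : 0 < k)
    (F R : ℝ → ℝ)
    (hF : ∀ u, F u = lam * th * k * u / (1 - th * u))
    (hR : ∀ u, R u = -lam * u)
    (c : ℝ) (hc : c = -1 / lam) :
    (1 / c) * (∫ u in c..(0:ℝ), (F u - F c) / (R u - 1)) =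
      k * lam / (1 + th / lam) * Real.log (1 + th / lam) := by
  subst hc
  set c : ℝ := -1 / lam with hc
  have hlam' : lam ≠ 0 := hlam.ne'
  have hcneg : c < 0 := by
    rw [hc]; exact div_neg_of_neg_of_pos (by norm_num) hlam
  have hsum : lam + th ≠ 0 := by positivity
  set A : ℝ := lam * th * k / (lam + th) with hA
  -- the integrand equals `-A / (1 - th*u)` on `Ioc c 0`
  have hcongr : ∀ u ∈ Set.uIoc c (0:ℝ), (F u - F c) / (R u - 1) = -A * (1 - th * u)⁻¹ := by
    intro u hu
    rw [uIoc_of_le hcneg.le] at hu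
    obtain ⟨h1, h2⟩ := hu
    have hden : (1 : ℝ) - th * u > 0 := by nlinarith
    have hlu : lam * u + 1 > 0 := by
      have : lam * c = -1 := by rw [hc]; field_simp
      nlinarith
    have hdenc : (1 : ℝ) - th * c > 0 := by nlinarith
    rw [hF, hF, hR]
    rw [div_eq_iff (by nlinarith : -lam * u - 1 ≠ 0)]
    rw [hA, hc]
    have e : (1:ℝ) - th * (-1 / lam) = (lam + th) / lam := by field_simp; ring
    rw [e]
    field_simp
    ring
  have key : (∫ u in c..(0:ℝ), (F u - F c) / (R u - 1))
      = ∫ u in c..(0:ℝ), -A * (1 - th * u)⁻¹ := by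
    exact intervalIntegral.integral_congr_ae (Filter.Eventually.of_forall hcongr)
  -- FTC
  have hval : ∀ u ∈ uIcc c (0:ℝ), (1:ℝ) - th * u > 0 := by
    intro u hu
    rw [uIcc_of_le hcneg.le] at hu
    nlinarith [hu.2]
  have hderiv : ∀ u ∈ uIcc c (0:ℝ),
      HasDerivAt (fun x => lam * k / (lam + th) * Real.log (1 - th * x))
        (-A * (1 - th * u)⁻¹) u := by
    intro u hu
    have h1 : HasDerivAt (fun x : ℝ => 1 - th * x) (-th) u := by
      simpa using ((hasDerivAt_id u).const_mul th).const_sub 1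
    have h2 := (Real.hasDerivAt_log (hval u hu).ne').comp u h1
    have h3 := h2.const_mul (lam * k / (lam + th))
    refine h3.congr_deriv ?_
    rw [hA]
    field_simp
  have hcont : IntervalIntegrable (fun u => -A * (1 - th * u)⁻¹)
      MeasureTheory.volume c 0 := by
    apply ContinuousOn.intervalIntegrable
    apply ContinuousOn.mul continuousOn_const
    exact ContinuousOn.inv₀ (Continuous.continuousOn (by continuity))
      (fun u hu => (hval u hu).ne')
  have hint := intervalIntegral.integral_eq_sub_of_hasDerivAt hderiv hcont
  have hc1 : (1:ℝ) - th * c = 1 + th / lam := by rw [hc]; field_simp; ring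
  rw [key, hint, hc1]
  have h1 : (1:ℝ) + th / lam > 0 := by positivity
  have : Real.log (1 - th * 0) = 0 := by norm_num
  rw [this, hc]
  field_simp
  ring
end
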